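/- arXiv:2010.10490 — 6 statements merged into one kernel-verified Lean document; each statement's English description precedes it below -/
import Mathlib

section
/- For all real numbers ξ1, ξ2 > 0 one has (1/(4π²√(ξ1ξ2))) · ( ∫_{{(u1,u2) ∈ ℝ² : u1 ≥ u2}} e^{−u1²/ξ1 − u2²/ξ2} · u1 du1du2 + ∫_{{(u1,u2) ∈ ℝ² : u2 ≥ u1}} e^{−u1²/ξ1 − u2²/ξ2} · u2 du1du2 ) = √(ξ1 + ξ2) / (8π^{3/2}). -/
open MeasureTheory Real Set Filter

lemma gauss_tail (b a : ℝ) (hb : 0 < b) :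
    ∫ x in Set.Ioi a, x * Real.exp (-b * x ^ 2) = Real.exp (-b * a ^ 2) / (2 * b) := by
  have hderiv : ∀ x ∈ Set.Ici a,
      HasDerivAt (fun x : ℝ => -(2 * b)⁻¹ * Real.exp (-b * x ^ 2))
        (x * Real.exp (-b * x ^ 2)) x := by
    intro x _
    convert ((hasDerivAt_pow 2 x).const_mul (-b)).exp.const_mul (-(2 * b)⁻¹) using 1
    · rfl
    · rfl
    field_simp
    ring
  have hint : IntegrableOn (fun x : ℝ => x * Real.exp (-b * x ^ 2)) (Set.Ioi a) :=
    (integrable_mul_exp_neg_mul_sq hb).integrableOn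
  have htend : Tendsto (fun x : ℝ => -(2 * b)⁻¹ * Real.exp (-b * x ^ 2)) atTop
      (nhds (-(2 * b)⁻¹ * 0)) := by
    refine Tendsto.const_mul _ ?_
    exact Real.tendsto_exp_atBot.comp
      ((tendsto_pow_atTop two_ne_zero).const_mul_atTop_of_neg (neg_lt_zero.2 hb))
  have := integral_Ioi_of_hasDerivAt_of_tendsto' hderiv hint htend
  rw [this]
  field_simp
  ring

lemma exp_split (a b x y : ℝ) :
    Real.exp (-x ^ 2 / a - y ^ 2 / b) = Real.exp (-a⁻¹ * x ^ 2) * Real.exp (-b⁻¹ * y ^ 2) := by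
  rw [← Real.exp_add]
  ring_nf

lemma prod_integrable (a b : ℝ) (ha : 0 < a) (hb : 0 < b) :
    Integrable (fun u : ℝ × ℝ => Real.exp (-u.1 ^ 2 / a - u.2 ^ 2 / b) * u.1)
      ((volume : Measure ℝ).prod volume) := by
  have h : (fun u : ℝ × ℝ => Real.exp (-u.1 ^ 2 / a - u.2 ^ 2 / b) * u.1)
      = fun u : ℝ × ℝ => (u.1 * Real.exp (-a⁻¹ * u.1 ^ 2)) * Real.exp (-b⁻¹ * u.2 ^ 2) := by
    funext u; rw [exp_split]; ring
  rw [h]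
  exact Integrable.mul_prod (integrable_mul_exp_neg_mul_sq (inv_pos.2 ha))
    (integrable_exp_neg_mul_sq (inv_pos.2 hb))

lemma halfplane (a b : ℝ) (ha : 0 < a) (hb : 0 < b) :
    ∫ u in {u : ℝ × ℝ | u.2 ≤ u.1}, Real.exp (-u.1 ^ 2 / a - u.2 ^ 2 / b) * u.1
      = a / 2 * Real.sqrt (Real.pi / (a⁻¹ + b⁻¹)) := by
  have hS : MeasurableSet {u : ℝ × ℝ | u.2 ≤ u.1} :=
    measurableSet_le measurable_snd measurable_fst
  rw [← integral_indicator hS]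
  rw [MeasureTheory.Measure.volume_eq_prod]
  rw [integral_prod_symm _ ((prod_integrable a b ha hb).indicator hS)]
  have inner : ∀ y : ℝ,
      (∫ x : ℝ, Set.indicator {u : ℝ × ℝ | u.2 ≤ u.1}
        (fun u => Real.exp (-u.1 ^ 2 / a - u.2 ^ 2 / b) * u.1) (x, y))
      = a / 2 * Real.exp (-(a⁻¹ + b⁻¹) * y ^ 2) := by
    intro y
    have h1 : ∀ x : ℝ, Set.indicator {u : ℝ × ℝ | u.2 ≤ u.1}
        (fun u => Real.exp (-u.1 ^ 2 / a - u.2 ^ 2 / b) * u.1) (x, y)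
        = Set.indicator (Set.Ici y)
            (fun x => Real.exp (-b⁻¹ * y ^ 2) * (x * Real.exp (-a⁻¹ * x ^ 2))) x := by
      intro x
      by_cases hxy : y ≤ x
      · rw [Set.indicator_of_mem (by exact hxy) , Set.indicator_of_mem (by exact hxy)]
        rw [exp_split]; ring
      · rw [Set.indicator_of_notMem (by exact hxy), Set.indicator_of_notMem (by exact hxy)]
    simp_rw [h1]
    rw [integral_indicator measurableSet_Ici, MeasureTheory.integral_Ici_eq_integral_Ioi,
      MeasureTheory.integral_const_mul, gauss_tail a⁻¹ y (inv_pos.2 ha)]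
    rw [show -(a⁻¹ + b⁻¹) * y ^ 2 = (-b⁻¹ * y ^ 2) + (-a⁻¹ * y ^ 2) by ring, Real.exp_add]
    field_simp
  simp_rw [inner]
  rw [MeasureTheory.integral_const_mul, integral_gaussian]

lemma halfplane2 (a b : ℝ) (ha : 0 < a) (hb : 0 < b) :
    ∫ u in {u : ℝ × ℝ | u.1 ≤ u.2}, Real.exp (-u.1 ^ 2 / a - u.2 ^ 2 / b) * u.2
      = b / 2 * Real.sqrt (Real.pi / (a⁻¹ + b⁻¹)) := by
  have hS : MeasurableSet {u : ℝ × ℝ | u.1 ≤ u.2} :=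
    measurableSet_le measurable_fst measurable_snd
  have hint : Integrable (fun u : ℝ × ℝ => Real.exp (-u.1 ^ 2 / a - u.2 ^ 2 / b) * u.2)
      ((volume : Measure ℝ).prod volume) := by
    have h : (fun u : ℝ × ℝ => Real.exp (-u.1 ^ 2 / a - u.2 ^ 2 / b) * u.2)
        = fun u : ℝ × ℝ => Real.exp (-a⁻¹ * u.1 ^ 2) * (u.2 * Real.exp (-b⁻¹ * u.2 ^ 2)) := by
      funext u; rw [exp_split]; ring
    rw [h]
    exact Integrable.mul_prod (integrable_exp_neg_mul_sq (inv_pos.2 ha))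
      (integrable_mul_exp_neg_mul_sq (inv_pos.2 hb))
  rw [← integral_indicator hS]
  rw [MeasureTheory.Measure.volume_eq_prod]
  rw [integral_prod _ (hint.indicator hS)]
  have inner : ∀ x : ℝ,
      (∫ y : ℝ, Set.indicator {u : ℝ × ℝ | u.1 ≤ u.2}
        (fun u => Real.exp (-u.1 ^ 2 / a - u.2 ^ 2 / b) * u.2) (x, y))
      = b / 2 * Real.exp (-(a⁻¹ + b⁻¹) * x ^ 2) := by
    intro x
    have h1 : ∀ y : ℝ, Set.indicator {u : ℝ × ℝ | u.1 ≤ u.2}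
        (fun u => Real.exp (-u.1 ^ 2 / a - u.2 ^ 2 / b) * u.2) (x, y)
        = Set.indicator (Set.Ici x)
            (fun y => Real.exp (-a⁻¹ * x ^ 2) * (y * Real.exp (-b⁻¹ * y ^ 2))) y := by
      intro y
      by_cases hxy : x ≤ y
      · rw [Set.indicator_of_mem (by exact hxy), Set.indicator_of_mem (by exact hxy)]
        rw [exp_split]; ring
      · rw [Set.indicator_of_notMem (by exact hxy), Set.indicator_of_notMem (by exact hxy)]
    simp_rw [h1]
    rw [integral_indicator measurableSet_Ici, MeasureTheory.integral_Ici_eq_integral_Ioi,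
      MeasureTheory.integral_const_mul, gauss_tail b⁻¹ x (inv_pos.2 hb)]
    rw [show -(a⁻¹ + b⁻¹) * x ^ 2 = (-a⁻¹ * x ^ 2) + (-b⁻¹ * x ^ 2) by ring, Real.exp_add]
    field_simp
  simp_rw [inner]
  rw [MeasureTheory.integral_const_mul, integral_gaussian]

/-- For all real numbers `ξ1, ξ2 > 0`, the constant `K₀` of the main theorem in the case `J = 2`
equals the constant `√(ξ1+ξ2)/(8π^{3/2})` predicted by Hejhal's conjecture. -/
theorem stmt_0 (ξ1 ξ2 : ℝ) (hξ1 : 0 < ξ1) (hξ2 : 0 < ξ2) :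
    (1 / (4 * Real.pi ^ 2 * Real.sqrt (ξ1 * ξ2))) *
      ((∫ u in {u : ℝ × ℝ | u.2 ≤ u.1},
          Real.exp (-u.1 ^ 2 / ξ1 - u.2 ^ 2 / ξ2) * u.1) +
        ∫ u in {u : ℝ × ℝ | u.1 ≤ u.2},
          Real.exp (-u.1 ^ 2 / ξ1 - u.2 ^ 2 / ξ2) * u.2) =
    Real.sqrt (ξ1 + ξ2) / (8 * Real.pi ^ ((3 : ℝ) / 2)) := by
  rw [halfplane ξ1 ξ2 hξ1 hξ2, halfplane2 ξ1 ξ2 hξ1 hξ2]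
  have hsum : 0 < ξ1 + ξ2 := by linarith
  have hπ : (0:ℝ) < Real.pi := Real.pi_pos
  have h1 : Real.pi / (ξ1⁻¹ + ξ2⁻¹) = Real.pi * (ξ1 * ξ2) / (ξ1 + ξ2) := by
    field_simp; ring
  have h2 : Real.sqrt (Real.pi / (ξ1⁻¹ + ξ2⁻¹))
      = Real.sqrt Real.pi * Real.sqrt (ξ1 * ξ2) / Real.sqrt (ξ1 + ξ2) := by
    rw [h1, Real.sqrt_div (by positivity), Real.sqrt_mul hπ.le]
  have h3 : Real.pi ^ ((3:ℝ)/2) = Real.pi ^ 2 / Real.sqrt Real.pi := by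
    rw [Real.sqrt_eq_rpow, ← Real.rpow_natCast Real.pi 2, ← Real.rpow_sub hπ]
    norm_num
  rw [h2, h3]
  have e1 : Real.sqrt (ξ1+ξ2) * Real.sqrt (ξ1+ξ2) = ξ1+ξ2 := Real.mul_self_sqrt hsum.le
  have e2 : Real.sqrt Real.pi * Real.sqrt Real.pi = Real.pi := Real.mul_self_sqrt hπ.le
  have n1 : Real.sqrt (ξ1*ξ2) ≠ 0 := by positivity
  have n2 : Real.sqrt (ξ1+ξ2) ≠ 0 := by positivity
  have n3 : Real.sqrt Real.pi ≠ 0 := by positivity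
  have hπn : Real.pi ≠ 0 := hπ.ne'
  field_simp
  linear_combination (-8) * e1
end

section
/- There exists a constant C > 0 such that for every real σ with 1/2 < σ ≤ 1, | ∫_2^∞ u^{−2σ}/log u du − ( log(1/(σ − 1/2)) − log(2 log 2) − γ ) | ≤ C (σ − 1/2), where γ := ∫_0^1 (1 − e^{−w})/w dw − ∫_1^∞ e^{−w}/w dw is the Euler–Mascheroni constant. -/
open MeasureTheory Set

private lemma aux_int_exp {x : ℝ} (hx : 0 < x) :
    IntegrableOn (fun w : ℝ => Real.exp (-w) / w) (Ioi x) := by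
  have hmeas : AEStronglyMeasurable (fun w : ℝ => Real.exp (-w) / w)
      (volume.restrict (Ioi x)) := by
    apply ContinuousOn.aestronglyMeasurable _ measurableSet_Ioi
    exact ContinuousOn.div (by fun_prop) continuousOn_id
      (fun w hw => ne_of_gt (hx.trans hw))
  have hint : Integrable (fun w : ℝ => x⁻¹ * Real.exp (-(1:ℝ) * w))
      (volume.restrict (Ioi x)) := (exp_neg_integrableOn_Ioi x one_pos).const_mul _
  refine hint.mono hmeas ?_
  filter_upwards [ae_restrict_mem measurableSet_Ioi] with w hw
  have hw0 : 0 < w := hx.trans hw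
  rw [Real.norm_eq_abs, Real.norm_eq_abs, abs_of_nonneg (by positivity),
    abs_of_nonneg (by positivity)]
  rw [neg_one_mul]
  have h1 : Real.exp (-w) / w ≤ Real.exp (-w) / x := by
    gcongr
    exact hw.le
  rw [mul_comm, ← div_eq_mul_inv]
  exact h1

private lemma aux_int_g {b : ℝ} (hb : b ≤ 1) :
    IntegrableOn (fun w : ℝ => (1 - Real.exp (-w)) / w) (Ioc 0 b) := by
  have hmeas : AEStronglyMeasurable (fun w : ℝ => (1 - Real.exp (-w)) / w)
      (volume.restrict (Ioc 0 b)) := by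
    apply ContinuousOn.aestronglyMeasurable _ measurableSet_Ioc
    exact ContinuousOn.div (by fun_prop) continuousOn_id (fun w hw => ne_of_gt hw.1)
  have hconst : IntegrableOn (fun _ : ℝ => (1:ℝ)) (Ioc 0 b) :=
    integrableOn_const measure_Ioc_lt_top.ne
  refine Integrable.mono hconst hmeas ?_
  filter_upwards [ae_restrict_mem measurableSet_Ioc] with w hw
  have hw0 : 0 < w := hw.1
  have h1 : 1 - Real.exp (-w) ≤ w := by nlinarith [Real.add_one_le_exp (-w)]
  have h0 : 0 ≤ 1 - Real.exp (-w) := by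
    have := Real.exp_le_exp.2 (neg_nonpos.2 hw0.le)
    simp only [Real.exp_zero] at this; linarith
  rw [Real.norm_eq_abs, abs_of_nonneg (by positivity), norm_one]
  exact div_le_one_of_le₀ h1 hw0.le

private lemma aux_bound {x : ℝ} (hx0 : 0 < x) :
    |∫ w in Ioc (0:ℝ) x, (1 - Real.exp (-w)) / w| ≤ x := by
  have h := norm_setIntegral_le_of_norm_le_const (C := 1) (μ := volume)
    (s := Ioc (0:ℝ) x) (f := fun w => (1 - Real.exp (-w)) / w)
    measure_Ioc_lt_top ?_
  · rw [Real.norm_eq_abs] at h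
    refine h.trans ?_
    rw [measureReal_def, Real.volume_Ioc, ENNReal.toReal_ofReal (by linarith), one_mul]
    linarith
  · intro w hw
    have hw0 : 0 < w := hw.1
    have h1 : 1 - Real.exp (-w) ≤ w := by nlinarith [Real.add_one_le_exp (-w)]
    have h0 : 0 ≤ 1 - Real.exp (-w) := by
      have := Real.exp_le_exp.2 (neg_nonpos.2 hw0.le)
      simp only [Real.exp_zero] at this; linarith
    rw [Real.norm_eq_abs, abs_of_nonneg (by positivity)]
    exact div_le_one_of_le₀ h1 hw0.le

private lemma aux_split {x : ℝ} (hx0 : 0 < x) (hx1 : x ≤ 1) :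
    (∫ w in Ioi x, Real.exp (-w) / w) =
      -Real.log x - (∫ w in Ioc (0:ℝ) 1, (1 - Real.exp (-w)) / w)
        + (∫ w in Ioc (0:ℝ) x, (1 - Real.exp (-w)) / w)
        + ∫ w in Ioi (1:ℝ), Real.exp (-w) / w := by
  have hf1 : IntegrableOn (fun w : ℝ => Real.exp (-w) / w) (Ioc x 1) :=
    (aux_int_exp hx0).mono_set Ioc_subset_Ioi_self
  have hinv : IntegrableOn (fun w : ℝ => w⁻¹) (Ioc x 1) :=
    (intervalIntegrable_inv_iff.2 (Or.inr (fun h => by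
      rw [Set.uIcc_of_le hx1] at h; linarith [h.1]))).1
  have hg1 : IntegrableOn (fun w : ℝ => (1 - Real.exp (-w)) / w) (Ioc x 1) :=
    (aux_int_g le_rfl).mono_set (Ioc_subset_Ioc hx0.le le_rfl)
  have hgx : IntegrableOn (fun w : ℝ => (1 - Real.exp (-w)) / w) (Ioc 0 x) :=
    (aux_int_g le_rfl).mono_set (Ioc_subset_Ioc le_rfl hx1)
  have h1 : (∫ w in Ioi x, Real.exp (-w) / w) =
      (∫ w in Ioc x 1, Real.exp (-w) / w) + ∫ w in Ioi (1:ℝ), Real.exp (-w) / w := by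
    rw [← setIntegral_union (Ioc_disjoint_Ioi le_rfl) measurableSet_Ioi hf1
      (aux_int_exp one_pos), Ioc_union_Ioi_eq_Ioi hx1]
  have h2 : (∫ w in Ioc x 1, Real.exp (-w) / w) =
      (∫ w in Ioc x 1, w⁻¹) - ∫ w in Ioc x 1, (1 - Real.exp (-w)) / w := by
    rw [← integral_sub hinv hg1]
    refine setIntegral_congr_fun measurableSet_Ioc (fun w hw => ?_)
    have hw0 : 0 < w := hx0.trans hw.1
    field_simp
    ring
  have h3 : (∫ w in Ioc x 1, w⁻¹) = -Real.log x := by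
    rw [← intervalIntegral.integral_of_le hx1, integral_inv_of_pos hx0 one_pos,
      one_div, Real.log_inv]
  have h4 : (∫ w in Ioc (0:ℝ) 1, (1 - Real.exp (-w)) / w) =
      (∫ w in Ioc (0:ℝ) x, (1 - Real.exp (-w)) / w)
        + ∫ w in Ioc x 1, (1 - Real.exp (-w)) / w := by
    rw [← setIntegral_union (Set.Ioc_disjoint_Ioc_of_le le_rfl) measurableSet_Ioc hgx hg1,
      Ioc_union_Ioc_eq_Ioc hx0.le hx1]
  rw [h1, h2, h3, h4]; ring

private lemma aux_subst {δ : ℝ} (hδ : 0 < δ) :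
    (∫ u in Ioi (2:ℝ), u ^ (-(1 + δ)) / Real.log u) =
      ∫ w in Ioi (δ * Real.log 2), Real.exp (-w) / w := by
  have himg : (fun u => δ * Real.log u) '' Ioi 2 = Ioi (δ * Real.log 2) := by
    ext w
    simp only [mem_image, mem_Ioi]
    constructor
    · rintro ⟨u, hu, rfl⟩
      exact mul_lt_mul_of_pos_left (Real.log_lt_log two_pos hu) hδ
    · intro hw
      refine ⟨Real.exp (w / δ), ?_, ?_⟩
      · rw [show (2:ℝ) = Real.exp (Real.log 2) from (Real.exp_log two_pos).symm]
        exact Real.exp_lt_exp.2 (by rw [lt_div_iff₀ hδ]; linarith [hw])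
      · rw [Real.log_exp]; field_simp
  have hf' : ∀ u ∈ Ioi (2:ℝ), HasDerivWithinAt (fun u => δ * Real.log u) (δ / u) (Ioi 2) u := by
    intro u hu
    have hu0 : u ≠ 0 := by have := mem_Ioi.1 hu; positivity
    have := ((Real.hasDerivAt_log hu0).const_mul δ).hasDerivWithinAt (s := Ioi (2:ℝ))
    simpa [div_eq_mul_inv] using this
  have hinj : InjOn (fun u => δ * Real.log u) (Ioi 2) := by
    have : StrictMonoOn (fun u => δ * Real.log u) (Ioi 2) := fun a ha b hb hab =>
      mul_lt_mul_of_pos_left (Real.log_lt_log (by linarith [mem_Ioi.1 ha]) hab) hδ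
    exact this.injOn
  rw [← himg, integral_image_eq_integral_abs_deriv_smul measurableSet_Ioi hf' hinj]
  refine setIntegral_congr_fun measurableSet_Ioi (fun u hu => ?_)
  have hu2 : 2 < u := mem_Ioi.1 hu
  have hu0 : 0 < u := by linarith
  have hlog : 0 < Real.log u := Real.log_pos (by linarith)
  rw [smul_eq_mul, abs_of_pos (div_pos hδ hu0), Real.rpow_def_of_pos hu0,
    show -(δ * Real.log u) = Real.log u * (-(1 + δ)) + Real.log u by ring,
    Real.exp_add, Real.exp_log hu0]
  field_simp

/-- There is `C > 0` such that for `1/2 < σ ≤ 1`,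
`∫_2^∞ u^{−2σ}/log u du = log(1/(σ−1/2)) − log(2 log 2) − γ + O(σ − 1/2)`,
where `γ` is the Euler–Mascheroni constant, given by
`γ = ∫_0^1 (1 − e^{−w})/w dw − ∫_1^∞ e^{−w}/w dw`. -/
theorem stmt_2 :
    ∃ C : ℝ, 0 < C ∧ ∀ σ : ℝ, 1 / 2 < σ → σ ≤ 1 →
      |(∫ u in Set.Ioi (2 : ℝ), u ^ (-(2 * σ)) / Real.log u) -
          (Real.log (1 / (σ - 1 / 2)) - Real.log (2 * Real.log 2) -
            ((∫ w in Set.Ioc (0 : ℝ) 1, (1 - Real.exp (-w)) / w) -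
              ∫ w in Set.Ioi (1 : ℝ), Real.exp (-w) / w))| ≤ C * (σ - 1 / 2) := by
  refine ⟨2 * Real.log 2, by positivity, fun σ hσ hσ1 => ?_⟩
  set δ : ℝ := 2 * σ - 1 with hδdef
  have hδ : 0 < δ := by simp [hδdef]; linarith
  have hδ1 : δ ≤ 1 := by simp [hδdef]; linarith
  set x : ℝ := δ * Real.log 2 with hxdef
  have hlog2 : 0 < Real.log 2 := Real.log_pos one_lt_two
  have hx0 : 0 < x := by positivity
  have hx1 : x ≤ 1 := by
    have h2 : Real.log 2 < 1 := by
      nlinarith [Real.log_two_lt_d9]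
    nlinarith
  have hsub : (∫ u in Set.Ioi (2 : ℝ), u ^ (-(2 * σ)) / Real.log u) =
      ∫ w in Ioi x, Real.exp (-w) / w := by
    rw [show -(2 * σ) = -(1 + δ) by rw [hδdef]; ring]
    exact aux_subst hδ
  have hlogx : Real.log x = Real.log (2 * Real.log 2) + Real.log (σ - 1/2) := by
    rw [show x = (2 * Real.log 2) * (σ - 1/2) by rw [hxdef, hδdef]; ring,
      Real.log_mul (by positivity) (by intro h; nlinarith [h])]
  have hloginv : Real.log (1 / (σ - 1/2)) = -Real.log (σ - 1/2) := by
    rw [one_div, Real.log_inv]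
  rw [hsub, aux_split hx0 hx1]
  have : -Real.log x - (∫ w in Ioc (0:ℝ) 1, (1 - Real.exp (-w)) / w)
        + (∫ w in Ioc (0:ℝ) x, (1 - Real.exp (-w)) / w)
        + (∫ w in Ioi (1:ℝ), Real.exp (-w) / w) -
      (Real.log (1 / (σ - 1 / 2)) - Real.log (2 * Real.log 2) -
        ((∫ w in Set.Ioc (0 : ℝ) 1, (1 - Real.exp (-w)) / w) -
          ∫ w in Set.Ioi (1 : ℝ), Real.exp (-w) / w)) =
      ∫ w in Ioc (0:ℝ) x, (1 - Real.exp (-w)) / w := by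
    rw [hlogx, hloginv]; ring
  rw [this]
  refine (aux_bound hx0).trans ?_
  rw [hxdef, hδdef]; nlinarith [hlog2]
end

section
/- The following three series converge: ∑_p ∑_{k ≥ 3} |β(p^k)| / p^{k/2} < ∞, ∑_p ∑_{k ≥ 2} |β(p^k)|² / p^{k} < ∞, and ∑_p |β(p)|⁴ / p² < ∞, where p runs over all primes. -/
open Finset

/-- `β(p^n) := (1/n) ∑_{i=1}^d α_i(p)^n`. -/
noncomputable def betaFn (d : ℕ) (α : ℕ → Fin d → ℂ) (p n : ℕ) : ℂ :=
  (n : ℂ)⁻¹ * ∑ i, (α p i) ^ n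

lemma core_summable (A : ℕ → ℝ) (hA : ∀ p, 0 ≤ A p) (s ε C : ℝ)
    (hε : 0 < ε) (hsε : 1 + ε < s) (hC : 0 < C)
    (h : ∀ x : ℝ, 2 ≤ x →
      ∑ p ∈ (Finset.range (⌊x⌋₊ + 1)).filter Nat.Prime, A p ≤ C * x ^ (1 + ε)) :
    Summable (fun p : ℕ => if p.Prime then A p * (p : ℝ) ^ (-s) else 0) := by
  set t : ℝ := (2 : ℝ) ^ (1 + ε - s) with ht_def
  have ht0 : 0 < t := Real.rpow_pos_of_pos (by norm_num) _
  have ht1 : t < 1 := Real.rpow_lt_one_of_one_lt_of_neg (by norm_num) (by linarith)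
  have hnonneg : ∀ n : ℕ, 0 ≤ (if n.Prime then A n * (n : ℝ) ^ (-s) else 0) := by
    intro n
    split
    · exact mul_nonneg (hA n) (Real.rpow_nonneg (Nat.cast_nonneg n) _)
    · exact le_rfl
  refine summable_of_sum_range_le (c := C * 2 ^ (1 + ε) * (1 - t)⁻¹) hnonneg ?_
  intro N
  rw [← Finset.sum_filter]
  have hmaps : ∀ n ∈ (Finset.range N).filter Nat.Prime, Nat.log 2 n ∈ Finset.range N := by
    intro n hn
    exact Finset.mem_range.mpr (lt_of_le_of_lt (Nat.log_le_self 2 n)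
      (Finset.mem_range.mp (Finset.mem_filter.mp hn).1))
  rw [← Finset.sum_fiberwise_of_maps_to hmaps]
  have hblock : ∀ j ∈ Finset.range N,
      ∑ n ∈ ((Finset.range N).filter Nat.Prime).filter (fun n => Nat.log 2 n = j),
        A n * (n : ℝ) ^ (-s) ≤ C * 2 ^ (1 + ε) * t ^ j := by
    intro j _
    have h1 : ∑ n ∈ ((Finset.range N).filter Nat.Prime).filter (fun n => Nat.log 2 n = j),
        A n * (n : ℝ) ^ (-s)
        ≤ ∑ n ∈ ((Finset.range N).filter Nat.Prime).filter (fun n => Nat.log 2 n = j),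
        A n * ((2 : ℝ) ^ j) ^ (-s) := by
      refine Finset.sum_le_sum ?_
      intro n hn
      obtain ⟨hn1, hlog⟩ := Finset.mem_filter.mp hn
      have hprime := (Finset.mem_filter.mp hn1).2
      have h2n : (2 : ℕ) ^ j ≤ n := hlog ▸ Nat.pow_log_le_self 2 hprime.ne_zero
      have h2n' : ((2 : ℝ) ^ j) ≤ (n : ℝ) := by exact_mod_cast h2n
      refine mul_le_mul_of_nonneg_left ?_ (hA n)
      exact Real.rpow_le_rpow_of_nonpos (by positivity) h2n' (by linarith)
    have h2 : ∑ n ∈ ((Finset.range N).filter Nat.Prime).filter (fun n => Nat.log 2 n = j),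
        A n ≤ C * ((2 : ℝ) ^ (j+1)) ^ (1 + ε) := by
      have hsub : ((Finset.range N).filter Nat.Prime).filter (fun n => Nat.log 2 n = j)
          ⊆ (Finset.range (⌊((2 ^ (j+1) : ℕ) : ℝ)⌋₊ + 1)).filter Nat.Prime := by
        intro n hn
        obtain ⟨hn1, hlog⟩ := Finset.mem_filter.mp hn
        have hprime := (Finset.mem_filter.mp hn1).2
        have : n < 2 ^ (j + 1) := hlog ▸ Nat.lt_pow_succ_log_self (by norm_num) n
        rw [Nat.floor_natCast]
        exact Finset.mem_filter.mpr ⟨Finset.mem_range.mpr (by omega), hprime⟩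
      have h2le : (2:ℕ) ≤ 2 ^ (j+1) := by
        calc (2:ℕ) = 2 ^ 1 := by norm_num
          _ ≤ 2 ^ (j+1) := Nat.pow_le_pow_right (by norm_num) (by omega)
      have := h ((2 ^ (j+1) : ℕ) : ℝ) (by exact_mod_cast h2le)
      calc ∑ n ∈ ((Finset.range N).filter Nat.Prime).filter (fun n => Nat.log 2 n = j), A n
          ≤ ∑ p ∈ (Finset.range (⌊((2 ^ (j+1) : ℕ) : ℝ)⌋₊ + 1)).filter Nat.Prime, A p :=
            Finset.sum_le_sum_of_subset_of_nonneg hsub (fun i _ _ => hA i)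
        _ ≤ C * (((2 ^ (j+1) : ℕ) : ℝ)) ^ (1 + ε) := this
        _ = C * ((2 : ℝ) ^ (j+1)) ^ (1 + ε) := by push_cast; ring_nf
    calc ∑ n ∈ ((Finset.range N).filter Nat.Prime).filter (fun n => Nat.log 2 n = j),
          A n * (n : ℝ) ^ (-s)
        ≤ (∑ n ∈ ((Finset.range N).filter Nat.Prime).filter (fun n => Nat.log 2 n = j),
          A n) * ((2 : ℝ) ^ j) ^ (-s) := by
          rw [Finset.sum_mul]; exact h1
      _ ≤ (C * ((2 : ℝ) ^ (j+1)) ^ (1 + ε)) * ((2 : ℝ) ^ j) ^ (-s) := by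
          refine mul_le_mul_of_nonneg_right h2 (Real.rpow_nonneg (by positivity) _)
      _ = C * 2 ^ (1 + ε) * t ^ j := by
          rw [← Real.rpow_natCast (2:ℝ) (j+1), ← Real.rpow_natCast (2:ℝ) j,
            ← Real.rpow_mul (by norm_num), ← Real.rpow_mul (by norm_num),
            ht_def, ← Real.rpow_natCast ((2:ℝ) ^ (1 + ε - s)) j,
            ← Real.rpow_mul (by norm_num), mul_assoc, ← Real.rpow_add (by norm_num),
            show (2:ℝ) ^ (1+ε) = (2:ℝ) ^ ((1:ℝ)+ε) by norm_num,
            mul_assoc, ← Real.rpow_add (by norm_num)]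
          push_cast
          ring_nf
  calc ∑ j ∈ Finset.range N, ∑ n ∈ ((Finset.range N).filter Nat.Prime).filter
          (fun n => Nat.log 2 n = j), A n * (n : ℝ) ^ (-s)
      ≤ ∑ j ∈ Finset.range N, C * 2 ^ (1 + ε) * t ^ j := Finset.sum_le_sum hblock
    _ = C * 2 ^ (1 + ε) * ∑ j ∈ Finset.range N, t ^ j := by rw [Finset.mul_sum]
    _ ≤ C * 2 ^ (1 + ε) * (1 - t)⁻¹ := by
        refine mul_le_mul_of_nonneg_left ?_ (by positivity)
        rw [← tsum_geometric_of_lt_one ht0.le ht1]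
        exact Summable.sum_le_tsum _ (fun i _ => by positivity) (summable_geometric_of_lt_one ht0.le ht1)
lemma geom_ite_summable (c r : ℝ) (hc : 0 ≤ c) (hr0 : 0 ≤ r) (hr1 : r < 1) (m : ℕ) :
    Summable (fun k : ℕ => if m ≤ k then c * r ^ k else 0) := by
  refine Summable.of_nonneg_of_le (fun k => ?_) (fun k => ?_)
    (((summable_geometric_of_lt_one hr0 hr1).mul_left c))
  · split
    · positivity
    · exact le_rfl
  · split
    · exact le_rfl
    · positivity
lemma geom_ite_tsum (c r : ℝ) (hc : 0 ≤ c) (hr0 : 0 ≤ r) (hr1 : r < 1) (m : ℕ) :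
    ∑' k : ℕ, (if m ≤ k then c * r ^ k else 0) = c * r ^ m * (1 - r)⁻¹ := by
  have hs := geom_ite_summable c r hc hr0 hr1 m
  rw [← Summable.sum_add_tsum_nat_add m hs]
  have h1 : ∑ k ∈ Finset.range m, (if m ≤ k then c * r ^ k else 0) = 0 := by
    refine Finset.sum_eq_zero fun k hk => ?_
    rw [if_neg (by simp at hk; omega)]
  rw [h1, zero_add]
  have h2 : (fun k : ℕ => if m ≤ k + m then c * r ^ (k + m) else 0)
      = fun k : ℕ => (c * r ^ m) * r ^ k := by
    funext k
    rw [if_pos (by omega), pow_add]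
    ring
  rw [h2, tsum_mul_left, tsum_geometric_of_lt_one hr0 hr1]
lemma aux_prod_summable (A : ℕ → ℝ) (hA : ∀ p, 0 ≤ A p) (a b : ℝ) (hb : b < 0) (m : ℕ)
    (hsum : Summable (fun p : ℕ => if p.Prime then A p * (p : ℝ) ^ (a + b * m) else 0)) :
    Summable (fun q : ℕ × ℕ => if q.1.Prime ∧ m ≤ q.2
      then (A q.1 * (q.1 : ℝ) ^ a) * ((q.1 : ℝ) ^ b) ^ q.2 else 0) := by
  have hK0 : (0:ℝ) < 1 - (2:ℝ) ^ b := by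
    have : (2:ℝ) ^ b < 1 := Real.rpow_lt_one_of_one_lt_of_neg one_lt_two hb
    linarith
  set K : ℝ := (1 - (2:ℝ) ^ b)⁻¹ with hK_def
  have hnonneg : ∀ q : ℕ × ℕ, 0 ≤ (if q.1.Prime ∧ m ≤ q.2
      then (A q.1 * (q.1 : ℝ) ^ a) * ((q.1 : ℝ) ^ b) ^ q.2 else 0) := by
    intro q
    split
    · have := hA q.1
      positivity
    · exact le_rfl
  rw [summable_prod_of_nonneg hnonneg]
  have hfib : ∀ p : ℕ, p.Prime → (fun k : ℕ => if p.Prime ∧ m ≤ k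
      then (A p * (p : ℝ) ^ a) * ((p : ℝ) ^ b) ^ k else 0)
      = fun k : ℕ => if m ≤ k then (A p * (p : ℝ) ^ a) * ((p : ℝ) ^ b) ^ k else 0 := by
    intro p hp
    funext k
    simp [hp]
  constructor
  · intro p
    by_cases hp : p.Prime
    · have hp2 : (2:ℝ) ≤ (p:ℝ) := by exact_mod_cast hp.two_le
      have hc : 0 ≤ A p * (p : ℝ) ^ a := mul_nonneg (hA p) (Real.rpow_nonneg (by positivity) _)
      have hr1 : (p:ℝ) ^ b < 1 := Real.rpow_lt_one_of_one_lt_of_neg (by linarith) hb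
      simpa [hfib p hp] using geom_ite_summable (A p * (p : ℝ) ^ a) ((p:ℝ) ^ b) hc
        (Real.rpow_nonneg (by positivity) _) hr1 m
    · refine summable_zero.congr fun k => ?_
      simp [hp]
  · refine Summable.of_nonneg_of_le (fun p => tsum_nonneg fun k => hnonneg (p, k))
      (fun p => ?_) (hsum.mul_left K)
    by_cases hp : p.Prime
    · have hp2 : (2:ℝ) ≤ (p:ℝ) := by exact_mod_cast hp.two_le
      have hp0 : (0:ℝ) < (p:ℝ) := by linarith
      have hc : 0 ≤ A p * (p : ℝ) ^ a := mul_nonneg (hA p) (Real.rpow_nonneg hp0.le _)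
      have hr0 : 0 ≤ (p:ℝ) ^ b := Real.rpow_nonneg hp0.le _
      have hr1 : (p:ℝ) ^ b < 1 := Real.rpow_lt_one_of_one_lt_of_neg (by linarith) hb
      have hrb : (p:ℝ) ^ b ≤ (2:ℝ) ^ b := Real.rpow_le_rpow_of_nonpos two_pos hp2 hb.le
      have hr0' : (0:ℝ) < 1 - (p:ℝ) ^ b := by linarith
      calc (∑' k : ℕ, if (p, k).1.Prime ∧ m ≤ (p, k).2
            then (A (p,k).1 * ((p,k).1 : ℝ) ^ a) * (((p,k).1 : ℝ) ^ b) ^ (p,k).2 else 0)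
          = (A p * (p : ℝ) ^ a) * ((p:ℝ) ^ b) ^ m * (1 - (p:ℝ) ^ b)⁻¹ := by
            rw [show (fun k : ℕ => if (p, k).1.Prime ∧ m ≤ (p, k).2
              then (A (p,k).1 * ((p,k).1 : ℝ) ^ a) * (((p,k).1 : ℝ) ^ b) ^ (p,k).2 else 0)
              = fun k : ℕ => if m ≤ k then (A p * (p : ℝ) ^ a) * ((p : ℝ) ^ b) ^ k else 0
              from hfib p hp]
            exact geom_ite_tsum _ _ hc hr0 hr1 m
        _ ≤ (A p * (p : ℝ) ^ (a + b * m)) * K := by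
            have he : (A p * (p : ℝ) ^ a) * ((p:ℝ) ^ b) ^ m = A p * (p : ℝ) ^ (a + b * m) := by
              rw [← Real.rpow_natCast ((p:ℝ) ^ b) m, ← Real.rpow_mul hp0.le,
                mul_assoc, ← Real.rpow_add hp0]
            rw [he]
            refine mul_le_mul_of_nonneg_left ?_ ?_
            · exact inv_anti₀ hK0 (by linarith)
            · exact mul_nonneg (hA p) (Real.rpow_nonneg hp0.le _)
        _ = K * (if p.Prime then A p * (p : ℝ) ^ (a + b * m) else 0) := by
            rw [if_pos hp]; ring
    · have hz : (fun k : ℕ => if (p, k).1.Prime ∧ m ≤ (p, k).2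
          then (A (p,k).1 * ((p,k).1 : ℝ) ^ a) * (((p,k).1 : ℝ) ^ b) ^ (p,k).2 else 0)
          = fun _ : ℕ => (0:ℝ) := by
        funext k; simp [hp]
      rw [hz, tsum_zero, if_neg hp, mul_zero]
/-- Under the local bound `|α_i(p)| ≤ p^θ` and the Ramanujan hypothesis on average, the
series `∑_p ∑_{k ≥ 3} |β(p^k)|/p^{k/2}`, `∑_p ∑_{k ≥ 2} |β(p^k)|²/p^k` and
`∑_p |β(p)|⁴/p²` converge. -/
theorem stmt_6 (d : ℕ) (hd : 1 ≤ d) (θ : ℝ) (hθ0 : 0 ≤ θ) (hθ : θ < 1 / 2)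
    (α : ℕ → Fin d → ℂ)
    (hα : ∀ p : ℕ, p.Prime → ∀ i, ‖α p i‖ ≤ (p : ℝ) ^ θ)
    (hram : ∀ ε : ℝ, 0 < ε → ∃ Cε : ℝ, 0 < Cε ∧ ∀ x : ℝ, 2 ≤ x →
      ∑ p ∈ (Finset.range (⌊x⌋₊ + 1)).filter Nat.Prime,
          ∑ i, ‖α p i‖ ^ 2 ≤ Cε * x ^ (1 + ε)) :
    Summable (fun q : ℕ × ℕ =>
      if q.1.Prime ∧ 3 ≤ q.2 then
        ‖betaFn d α q.1 q.2‖ / (q.1 : ℝ) ^ ((q.2 : ℝ) / 2)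
      else 0) ∧
    Summable (fun q : ℕ × ℕ =>
      if q.1.Prime ∧ 2 ≤ q.2 then
        ‖betaFn d α q.1 q.2‖ ^ 2 / (q.1 : ℝ) ^ (q.2 : ℕ)
      else 0) ∧
    Summable (fun p : ℕ =>
      if p.Prime then ‖betaFn d α p 1‖ ^ 4 / (p : ℝ) ^ 2 else 0) := by
  set A : ℕ → ℝ := fun p => ∑ i, ‖α p i‖ ^ 2 with hA_def
  have hA0 : ∀ p, 0 ≤ A p := fun p => Finset.sum_nonneg fun i _ => by positivity
  have hAd : ∀ p : ℕ, p.Prime → A p ≤ d * (p : ℝ) ^ (θ * 2) := by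
    intro p hp
    have hp0 : (0:ℝ) < p := by exact_mod_cast hp.pos
    calc A p ≤ ∑ _i : Fin d, ((p:ℝ) ^ θ) ^ 2 :=
          Finset.sum_le_sum fun i _ => pow_le_pow_left₀ (norm_nonneg _) (hα p hp i) 2
      _ = d * (p:ℝ) ^ (θ * 2) := by
          rw [Finset.sum_const, Finset.card_univ, Fintype.card_fin, nsmul_eq_mul,
            ← Real.rpow_natCast ((p:ℝ) ^ θ) 2, ← Real.rpow_mul hp0.le]
          norm_num
  have hbeta : ∀ p : ℕ, p.Prime → ∀ k : ℕ, 2 ≤ k →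
      ‖betaFn d α p k‖ ≤ A p * (p : ℝ) ^ (θ * ((k : ℝ) - 2)) := by
    intro p hp k hk
    have hp0 : (0:ℝ) < p := by exact_mod_cast hp.pos
    have h1 : ‖betaFn d α p k‖ ≤ ∑ i, ‖α p i‖ ^ k := by
      rw [betaFn, norm_mul, norm_inv, Complex.norm_natCast]
      have h2 : ‖∑ i, α p i ^ k‖ ≤ ∑ i, ‖α p i‖ ^ k := by
        refine le_trans (norm_sum_le _ _) (le_of_eq ?_)
        simp [map_pow]
      have hk1 : ((k:ℝ))⁻¹ ≤ 1 := by
        rw [inv_le_one_iff₀]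
        right
        exact_mod_cast Nat.one_le_iff_ne_zero.mpr (by omega)
      calc (k:ℝ)⁻¹ * ‖∑ i, α p i ^ k‖
          ≤ 1 * (∑ i, ‖α p i‖ ^ k) :=
            mul_le_mul hk1 h2 (norm_nonneg _) one_pos.le
        _ = ∑ i, ‖α p i‖ ^ k := one_mul _
    refine h1.trans ?_
    have h3 : ∀ i : Fin d, ‖α p i‖ ^ k
        ≤ ‖α p i‖ ^ 2 * (p:ℝ) ^ (θ * ((k:ℝ) - 2)) := by
      intro i
      have ha0 : 0 ≤ ‖α p i‖ := norm_nonneg _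
      have hsplit : ‖α p i‖ ^ k
          = ‖α p i‖ ^ 2 * ‖α p i‖ ^ (k - 2) := by
        rw [← pow_add]; congr 1; omega
      rw [hsplit]
      refine mul_le_mul_of_nonneg_left ?_ (by positivity)
      calc ‖α p i‖ ^ (k - 2) ≤ ((p:ℝ) ^ θ) ^ (k - 2) :=
            pow_le_pow_left₀ ha0 (hα p hp i) _
        _ = (p:ℝ) ^ (θ * ((k:ℝ) - 2)) := by
            rw [← Real.rpow_natCast ((p:ℝ) ^ θ) (k - 2), ← Real.rpow_mul hp0.le]
            congr 1
            rw [Nat.cast_sub hk]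
            push_cast; ring
    calc ∑ i, ‖α p i‖ ^ k
        ≤ ∑ i, ‖α p i‖ ^ 2 * (p:ℝ) ^ (θ * ((k:ℝ) - 2)) :=
          Finset.sum_le_sum fun i _ => h3 i
      _ = A p * (p:ℝ) ^ (θ * ((k:ℝ) - 2)) := by rw [← Finset.sum_mul]
  obtain ⟨C₁, hC₁, hram₁⟩ := hram ((1/2 - θ)/2) (by linarith)
  obtain ⟨C₂, hC₂, hram₂⟩ := hram ((1 - 2*θ)/2) (by linarith)
  have hsum1 : Summable (fun p : ℕ => if p.Prime then A p * (p:ℝ) ^ (-(3/2 - θ)) else 0) :=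
    core_summable A hA0 (3/2 - θ) ((1/2 - θ)/2) C₁ (by linarith) (by linarith) hC₁
      (fun x hx => hram₁ x hx)
  have hsum2 : Summable (fun p : ℕ => if p.Prime then A p * (p:ℝ) ^ (-(2 - 2*θ)) else 0) :=
    core_summable A hA0 (2 - 2*θ) ((1 - 2*θ)/2) C₂ (by linarith) (by linarith) hC₂
      (fun x hx => hram₂ x hx)
  refine ⟨?_, ?_, ?_⟩
  · -- Part 1
    have hs : Summable (fun p : ℕ => if p.Prime then
        A p * (p : ℝ) ^ ((-(2*θ)) + (θ - 1/2) * (3:ℕ)) else 0) := by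
      refine hsum1.congr fun p => ?_
      by_cases hp : p.Prime
      · rw [if_pos hp, if_pos hp, show (-(3/2 - θ) : ℝ) = (-(2*θ)) + (θ - 1/2) * ((3:ℕ):ℝ) by
          push_cast; ring]
      · rw [if_neg hp, if_neg hp]
    refine Summable.of_nonneg_of_le (fun q => ?_) (fun q => ?_)
      (aux_prod_summable A hA0 (-(2*θ)) (θ - 1/2) (by linarith) 3 hs)
    · split
      · exact div_nonneg (norm_nonneg _) (Real.rpow_nonneg (Nat.cast_nonneg _) _)
      · exact le_rfl
    · obtain ⟨p, k⟩ := q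
      by_cases hpk : p.Prime ∧ 3 ≤ k
      · rw [if_pos hpk, if_pos hpk]
        obtain ⟨hp, hk3⟩ := hpk
        have hp0 : (0:ℝ) < p := by exact_mod_cast hp.pos
        calc ‖betaFn d α p k‖ / (p:ℝ) ^ ((k:ℝ)/2)
            ≤ (A p * (p:ℝ) ^ (θ * ((k:ℝ) - 2))) / (p:ℝ) ^ ((k:ℝ)/2) := by
              have := hbeta p hp k (by omega)
              gcongr
          _ = A p * (p:ℝ) ^ (θ * ((k:ℝ) - 2) - (k:ℝ)/2) := by
              rw [Real.rpow_sub hp0]; ring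
          _ = (A p * (p:ℝ) ^ (-(2*θ))) * ((p:ℝ) ^ (θ - 1/2)) ^ k := by
              rw [← Real.rpow_natCast ((p:ℝ) ^ (θ - 1/2)) k, ← Real.rpow_mul hp0.le,
                mul_assoc, ← Real.rpow_add hp0,
                show (-(2*θ) + (θ - 1/2) * ((k:ℕ):ℝ)) = θ * ((k:ℝ) - 2) - (k:ℝ)/2 by
                  push_cast; ring]
      · rw [if_neg hpk, if_neg hpk]
  · -- Part 2
    have hs : Summable (fun p : ℕ => if p.Prime then
        ((d:ℝ) * A p) * (p : ℝ) ^ ((-(2*θ)) + (2*θ - 1) * (2:ℕ)) else 0) := by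
      refine (hsum2.mul_left (d:ℝ)).congr fun p => ?_
      by_cases hp : p.Prime
      · rw [if_pos hp, if_pos hp, show ((-(2*θ)) + (2*θ - 1) * ((2:ℕ):ℝ)) = -(2 - 2*θ) by
          push_cast; ring]
        ring
      · rw [if_neg hp, if_neg hp, mul_zero]
    refine Summable.of_nonneg_of_le (fun q => ?_) (fun q => ?_)
      (aux_prod_summable (fun p => (d:ℝ) * A p)
        (fun p => mul_nonneg (Nat.cast_nonneg d) (hA0 p)) (-(2*θ)) (2*θ - 1)
        (by linarith) 2 hs)
    · split
      · exact div_nonneg (by positivity) (by positivity)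
      · exact le_rfl
    · obtain ⟨p, k⟩ := q
      by_cases hpk : p.Prime ∧ 2 ≤ k
      · rw [if_pos hpk, if_pos hpk]
        obtain ⟨hp, hk2⟩ := hpk
        have hp0 : (0:ℝ) < p := by exact_mod_cast hp.pos
        have hsq : (A p) ^ 2 ≤ ((d:ℝ) * (p:ℝ) ^ (θ * 2)) * A p := by
          rw [sq]
          exact mul_le_mul_of_nonneg_right (hAd p hp) (hA0 p)
        calc ‖betaFn d α p k‖ ^ 2 / (p:ℝ) ^ (k:ℕ)
            ≤ (A p * (p:ℝ) ^ (θ * ((k:ℝ) - 2))) ^ 2 / (p:ℝ) ^ (k:ℕ) := by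
              have h1 := hbeta p hp k hk2
              gcongr <;> first | exact norm_nonneg _ | exact h1
          _ = (A p) ^ 2 * (p:ℝ) ^ (θ * ((k:ℝ) - 2) * 2 - (k:ℝ)) := by
              rw [mul_pow, ← Real.rpow_natCast ((p:ℝ) ^ (θ * ((k:ℝ) - 2))) 2,
                ← Real.rpow_mul hp0.le, ← Real.rpow_natCast (p:ℝ) k,
                div_eq_mul_inv, ← Real.rpow_neg hp0.le, mul_assoc, ← Real.rpow_add hp0,
                show (θ * ((k:ℝ) - 2) * ((2:ℕ):ℝ) + -((k:ℕ):ℝ))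
                  = θ * ((k:ℝ) - 2) * 2 - (k:ℝ) by push_cast; ring]
          _ ≤ (((d:ℝ) * (p:ℝ) ^ (θ * 2)) * A p) * (p:ℝ) ^ (θ * ((k:ℝ) - 2) * 2 - (k:ℝ)) :=
              mul_le_mul_of_nonneg_right hsq (Real.rpow_nonneg hp0.le _)
          _ = (((d:ℝ) * A p) * (p:ℝ) ^ (-(2*θ))) * ((p:ℝ) ^ (2*θ - 1)) ^ k := by
              rw [← Real.rpow_natCast ((p:ℝ) ^ (2*θ - 1)) k, ← Real.rpow_mul hp0.le]
              calc ((d:ℝ) * (p:ℝ) ^ (θ * 2) * A p) * (p:ℝ) ^ (θ * ((k:ℝ) - 2) * 2 - (k:ℝ))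
                  = ((d:ℝ) * A p) * ((p:ℝ) ^ (θ * 2)
                      * (p:ℝ) ^ (θ * ((k:ℝ) - 2) * 2 - (k:ℝ))) := by ring
                _ = ((d:ℝ) * A p) * (p:ℝ) ^ (θ * 2 + (θ * ((k:ℝ) - 2) * 2 - (k:ℝ))) := by
                    rw [← Real.rpow_add hp0]
                _ = ((d:ℝ) * A p) * (p:ℝ) ^ (-(2*θ) + (2*θ - 1) * ((k:ℕ):ℝ)) := by
                    rw [show (θ * 2 + (θ * ((k:ℝ) - 2) * 2 - (k:ℝ)))
                      = -(2*θ) + (2*θ - 1) * ((k:ℕ):ℝ) by push_cast; ring]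
                _ = ((d:ℝ) * A p) * (p:ℝ) ^ (-(2*θ)) * (p:ℝ) ^ ((2*θ - 1) * ((k:ℕ):ℝ)) := by
                    rw [Real.rpow_add hp0]; ring
      · rw [if_neg hpk, if_neg hpk]
  · -- Part 3
    refine Summable.of_nonneg_of_le (fun p => ?_) (fun p => ?_)
      (hsum2.mul_left ((d:ℝ) ^ 3))
    · split
      · exact div_nonneg (by positivity) (by positivity)
      · exact le_rfl
    · by_cases hp : p.Prime
      · rw [if_pos hp, if_pos hp]
        have hp0 : (0:ℝ) < p := by exact_mod_cast hp.pos
        have hS : ‖betaFn d α p 1‖ ≤ ∑ i, ‖α p i‖ := by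
          rw [betaFn]
          simp only [Nat.cast_one, inv_one, one_mul, pow_one]
          exact norm_sum_le _ _
        have hS2 : (∑ i, ‖α p i‖) ^ 2 ≤ (d:ℝ) * A p := by
          have := sq_sum_le_card_mul_sum_sq (s := (Finset.univ : Finset (Fin d)))
            (f := fun i => ‖α p i‖)
          simpa [Finset.card_univ] using this
        have h4 : ‖betaFn d α p 1‖ ^ 4 ≤ ((d:ℝ) * A p) ^ 2 := by
          calc ‖betaFn d α p 1‖ ^ 4
              = (‖betaFn d α p 1‖ ^ 2) ^ 2 := by ring
            _ ≤ ((∑ i, ‖α p i‖) ^ 2) ^ 2 := by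
                refine pow_le_pow_left₀ (by positivity) ?_ 2
                exact pow_le_pow_left₀ (norm_nonneg _) hS 2
            _ ≤ ((d:ℝ) * A p) ^ 2 := pow_le_pow_left₀ (by positivity) hS2 2
        have h5 : ((d:ℝ) * A p) ^ 2 ≤ (d:ℝ) ^ 3 * (p:ℝ) ^ (θ * 2) * A p := by
          have hsq : (A p) ^ 2 ≤ ((d:ℝ) * (p:ℝ) ^ (θ * 2)) * A p := by
            rw [sq]
            exact mul_le_mul_of_nonneg_right (hAd p hp) (hA0 p)
          calc ((d:ℝ) * A p) ^ 2 = (d:ℝ) ^ 2 * (A p) ^ 2 := by ring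
            _ ≤ (d:ℝ) ^ 2 * (((d:ℝ) * (p:ℝ) ^ (θ * 2)) * A p) :=
                mul_le_mul_of_nonneg_left hsq (by positivity)
            _ = (d:ℝ) ^ 3 * (p:ℝ) ^ (θ * 2) * A p := by ring
        calc ‖betaFn d α p 1‖ ^ 4 / (p:ℝ) ^ 2
            ≤ ((d:ℝ) ^ 3 * (p:ℝ) ^ (θ * 2) * A p) / (p:ℝ) ^ 2 := by
              gcongr
              exact h4.trans h5
          _ = (d:ℝ) ^ 3 * (A p * (p:ℝ) ^ (-(2 - 2*θ))) := by
              rw [← Real.rpow_natCast (p:ℝ) 2, div_eq_mul_inv, ← Real.rpow_neg hp0.le]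
              calc (d:ℝ)^3 * (p:ℝ)^(θ*2) * A p * (p:ℝ)^(-((2:ℕ):ℝ))
                  = (d:ℝ)^3 * (A p * ((p:ℝ)^(θ*2) * (p:ℝ)^(-((2:ℕ):ℝ)))) := by ring
                _ = (d:ℝ)^3 * (A p * (p:ℝ)^(θ*2 + -((2:ℕ):ℝ))) := by rw [← Real.rpow_add hp0]
                _ = (d:ℝ)^3 * (A p * (p:ℝ)^(-(2 - 2*θ))) := by
                    rw [show θ*2 + -((2:ℕ):ℝ) = -(2 - 2*θ) by push_cast; ring]
      · rw [if_neg hp, if_neg hp, mul_zero]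
end

section
/- For every real z ≥ 2, every complex-valued function a on the primes, and every integer k ≥ 1, 𝔼[ | ∑_{p ≤ z} a(p) X_p |^{2k} ] ≤ k! · ( ∑_{p ≤ z} |a(p)|² )^{k}, where the sums run over primes p ≤ z. -/
open Finset MeasureTheory ProbabilityTheory

/-- The uniform probability distribution on the unit circle `{z ∈ ℂ : |z| = 1}`, realized as
the pushforward of normalized Lebesgue measure on `(0, 2π]` under `t ↦ e^{it}`. -/
noncomputable def circleUniform : Measure ℂ :=
  Measure.map (fun t : ℝ => Complex.exp (t * Complex.I))
    ((ENNReal.ofReal (2 * Real.pi))⁻¹ • volume.restrict (Set.Ioc 0 (2 * Real.pi)))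

lemma circle_moment (m n : ℕ) :
    ∫ w, w ^ m * (starRingEnd ℂ) w ^ n ∂circleUniform = if m = n then 1 else 0 := by
  have hmeas : AEStronglyMeasurable (fun w : ℂ => w ^ m * (starRingEnd ℂ) w ^ n)
      (Measure.map (fun t : ℝ => Complex.exp (t * Complex.I))
        ((ENNReal.ofReal (2 * Real.pi))⁻¹ • volume.restrict (Set.Ioc 0 (2 * Real.pi)))) :=
    ((continuous_pow m).mul ((Complex.continuous_conj.pow n))).aestronglyMeasurable
  rw [circleUniform, integral_map (by fun_prop) hmeas]
  have key : ∀ t : ℝ, (Complex.exp (t * Complex.I)) ^ m *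
      (starRingEnd ℂ) (Complex.exp (t * Complex.I)) ^ n =
      Complex.exp ((((m : ℂ) - n) * Complex.I) * t) := by
    intro t
    rw [← Complex.exp_conj, ← Complex.exp_nat_mul, ← Complex.exp_nat_mul, ← Complex.exp_add]
    congr 1
    simp [Complex.conj_mul', Complex.conj_I]
    ring
  simp_rw [key]
  rw [integral_smul_measure]
  by_cases h : m = n
  · subst h
    simp only [sub_self, zero_mul, Complex.exp_zero, if_true]
    rw [setIntegral_const]
    simp only [Real.volume_Ioc, sub_zero, ENNReal.toReal_inv,
      ENNReal.toReal_ofReal (by positivity : (0:ℝ) ≤ 2*Real.pi)]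
    rw [measureReal_def, Real.volume_Ioc, sub_zero, ENNReal.toReal_ofReal (by positivity : (0:ℝ) ≤ 2*Real.pi),
      smul_smul, inv_mul_cancel₀ (by positivity : (2*Real.pi) ≠ 0), one_smul]
  · rw [if_neg h]
    have hc : ((m : ℂ) - n) * Complex.I ≠ 0 := by
      simp [Complex.ext_iff, sub_eq_zero]
      exact_mod_cast fun h' => h (Nat.cast_injective h')
    rw [← intervalIntegral.integral_of_le (by positivity), integral_exp_mul_complex hc]
    have h2 : Complex.exp (((m : ℂ) - n) * Complex.I * (2 * Real.pi)) = 1 := by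
      have := Complex.exp_int_mul_two_pi_mul_I ((m : ℤ) - n)
      rw [← this]
      congr 1
      push_cast
      ring
    simp [h2]

lemma exists_comp_perm {k : ℕ} {f g : Fin k → ℕ} (h : (List.ofFn f).Perm (List.ofFn g)) :
    ∃ σ : Equiv.Perm (Fin k), g = f ∘ σ := by
  have pf : (List.ofFn (f ∘ Tuple.sort f)).Perm (List.ofFn (g ∘ Tuple.sort g)) :=
    ((Equiv.Perm.ofFn_comp_perm _ f).trans h).trans (Equiv.Perm.ofFn_comp_perm _ g).symm
  have heq : f ∘ Tuple.sort f = g ∘ Tuple.sort g :=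
    List.ofFn_injective (List.Perm.eq_of_sortedLE (hl₁₂ := pf)
      (List.sortedLE_ofFn_iff.2 (Tuple.monotone_sort f))
      (List.sortedLE_ofFn_iff.2 (Tuple.monotone_sort g)))
  refine ⟨(Tuple.sort g).symm.trans (Tuple.sort f), funext fun i => ?_⟩
  have := congrFun heq ((Tuple.sort g).symm i)
  simpa using this.symm

lemma count_ofFn_eq {k : ℕ} (f : Fin k → ℕ) (p : ℕ) :
    (List.ofFn f).count p = (Finset.univ.filter fun i => f i = p).card := by
  have h1 : (↑(List.ofFn f) : Multiset ℕ) = Multiset.map f (Finset.univ : Finset (Fin k)).val := by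
    rw [List.ofFn_eq_map]
    simp [Fin.univ_def]
  have := congrArg (Multiset.count p) h1
  rw [Multiset.coe_count] at this
  rw [this, Multiset.count_map, Finset.card, Finset.filter_val]
  congr 1
  exact Multiset.filter_congr (fun x _ => by rw [eq_comm])

lemma perm_of_count_eq {k : ℕ} {f g : Fin k → ℕ}
    (h : ∀ p, (Finset.univ.filter fun i => f i = p).card
      = (Finset.univ.filter fun i => g i = p).card) :
    (List.ofFn f).Perm (List.ofFn g) := by
  rw [← Multiset.coe_eq_coe]
  ext p
  rw [Multiset.coe_count, Multiset.coe_count, count_ofFn_eq, count_ofFn_eq]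
  exact h p

lemma indep_integral_mul_complex {Ω : Type*} [MeasurableSpace Ω] {μ : Measure Ω}
    {X Y : Ω → ℂ} (h : IndepFun X Y μ) (hX : Integrable X μ) (hY : Integrable Y μ) :
    ∫ ω, X ω * Y ω ∂μ = (∫ ω, X ω ∂μ) * ∫ ω, Y ω ∂μ := by
  have hXY : Integrable (X * Y) μ := h.integrable_mul hX hY
  have hXY' : Integrable (fun ω => X ω * Y ω) μ := hXY
  have hrr : Integrable (fun ω => (X ω).re * (Y ω).re) μ :=
    ((h.comp Complex.measurable_re Complex.measurable_re).integrable_mul hX.re hY.re :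
      Integrable ((fun ω => (X ω).re) * fun ω => (Y ω).re) μ)
  have hii : Integrable (fun ω => (X ω).im * (Y ω).im) μ :=
    ((h.comp Complex.measurable_im Complex.measurable_im).integrable_mul hX.im hY.im :
      Integrable ((fun ω => (X ω).im) * fun ω => (Y ω).im) μ)
  have hri : Integrable (fun ω => (X ω).re * (Y ω).im) μ :=
    ((h.comp Complex.measurable_re Complex.measurable_im).integrable_mul hX.re hY.im :
      Integrable ((fun ω => (X ω).re) * fun ω => (Y ω).im) μ)
  have hir : Integrable (fun ω => (X ω).im * (Y ω).re) μ :=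
    ((h.comp Complex.measurable_im Complex.measurable_re).integrable_mul hX.im hY.re :
      Integrable ((fun ω => (X ω).im) * fun ω => (Y ω).re) μ)
  have err : ∫ ω, (X ω).re * (Y ω).re ∂μ = (∫ ω, (X ω).re ∂μ) * ∫ ω, (Y ω).re ∂μ :=
    (h.comp Complex.measurable_re Complex.measurable_re).integral_fun_mul_eq_mul_integral hX.re.1 hY.re.1
  have eii : ∫ ω, (X ω).im * (Y ω).im ∂μ = (∫ ω, (X ω).im ∂μ) * ∫ ω, (Y ω).im ∂μ :=
    (h.comp Complex.measurable_im Complex.measurable_im).integral_fun_mul_eq_mul_integral hX.im.1 hY.im.1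
  have eri : ∫ ω, (X ω).re * (Y ω).im ∂μ = (∫ ω, (X ω).re ∂μ) * ∫ ω, (Y ω).im ∂μ :=
    (h.comp Complex.measurable_re Complex.measurable_im).integral_fun_mul_eq_mul_integral hX.re.1 hY.im.1
  have eir : ∫ ω, (X ω).im * (Y ω).re ∂μ = (∫ ω, (X ω).im ∂μ) * ∫ ω, (Y ω).re ∂μ :=
    (h.comp Complex.measurable_im Complex.measurable_re).integral_fun_mul_eq_mul_integral hX.im.1 hY.re.1
  have hre : ∀ (f : Ω → ℂ), Integrable f μ → ∫ ω, (f ω).re ∂μ = (∫ ω, f ω ∂μ).re := by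
    intro f hf
    simpa only [RCLike.re_to_complex] using integral_re hf
  have him : ∀ (f : Ω → ℂ), Integrable f μ → ∫ ω, (f ω).im ∂μ = (∫ ω, f ω ∂μ).im := by
    intro f hf
    simpa only [RCLike.im_to_complex] using integral_im hf
  apply Complex.ext
  · rw [Complex.mul_re, ← hre _ hX, ← hre _ hY, ← him _ hX, ← him _ hY, ← err, ← eii,
      ← hre _ hXY']
    simp_rw [Complex.mul_re]
    exact integral_sub hrr hii
  · rw [Complex.mul_im, ← hre _ hX, ← hre _ hY, ← him _ hX, ← him _ hY, ← eri, ← eir,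
      ← him _ hXY']
    simp_rw [Complex.mul_im]
    exact integral_add hri hir

lemma integral_prod_of_indep {Ω : Type*} [MeasurableSpace Ω] (μ : Measure Ω)
    [IsProbabilityMeasure μ] {ι : Type*} (Y : ι → Ω → ℂ)
    (hmeas : ∀ i, Measurable (Y i))
    (hindep : iIndepFun Y μ)
    (hbd : ∀ i, ∀ᵐ ω ∂μ, ‖Y i ω‖ ≤ 1)
    (s : Finset ι) :
    ∫ ω, ∏ i ∈ s, Y i ω ∂μ = ∏ i ∈ s, ∫ ω, Y i ω ∂μ := by
  classical
  have hint : ∀ i, Integrable (Y i) μ := fun i =>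
    Integrable.mono' (integrable_const 1) (hmeas i).aestronglyMeasurable (hbd i)
  have hprodint : ∀ t : Finset ι, Integrable (fun ω => ∏ i ∈ t, Y i ω) μ := by
    intro t
    refine Integrable.mono' (integrable_const 1)
      (Finset.measurable_prod t (fun j _ => hmeas j)).aestronglyMeasurable ?_
    have hb : ∀ᵐ ω ∂μ, ∀ i ∈ t, ‖Y i ω‖ ≤ 1 :=
      (ae_ball_iff t.countable_toSet).2 (fun i _ => hbd i)
    filter_upwards [hb] with ω hω
    rw [norm_prod]
    exact Finset.prod_le_one (fun i _ => norm_nonneg _) hω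
  induction s using Finset.induction_on with
  | empty => simp
  | insert q s' hi ih =>
    have hind : IndepFun (∏ j ∈ s', Y j) (Y q) μ :=
      hindep.indepFun_finset_prod_of_notMem hmeas hi
    simp_rw [Finset.prod_insert hi]
    rw [← ih]
    have hind' : IndepFun (Y q) (fun ω => ∏ j ∈ s', Y j ω) μ := by
      have : (∏ j ∈ s', Y j) = fun ω => ∏ j ∈ s', Y j ω := by rw [Finset.prod_fn]
      exact (this ▸ hind).symm
    exact indep_integral_mul_complex hind' (hint q) (hprodint s')

lemma group_prod {k : ℕ} {F : Finset ℕ} {f : Fin k → ℕ} (hf : ∀ i, f i ∈ F) (v : ℕ → ℂ) :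
    ∏ i, v (f i) = ∏ p ∈ F, v p ^ (Finset.univ.filter fun i => f i = p).card := by
  classical
  rw [Finset.prod_comp v f]
  refine Finset.prod_subset ?_ ?_
  · intro p hp
    obtain ⟨i, _, rfl⟩ := Finset.mem_image.1 hp
    exact hf i
  · intro p _ hp
    have : (Finset.univ.filter fun i => f i = p) = ∅ := by
      rw [Finset.filter_eq_empty_iff]
      intro i _ hip
      exact hp (Finset.mem_image.2 ⟨i, Finset.mem_univ i, hip⟩)
    rw [this]
    simp

/-- If `(X_p)_{p prime}` is a family of independent random variables, each uniformly
distributed on the unit circle, then for every `z ≥ 2`, every `a : ℕ → ℂ` and every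
integer `k ≥ 1`, `𝔼[|∑_{p ≤ z} a(p) X_p|^{2k}] ≤ k! (∑_{p ≤ z} |a(p)|²)^k`. -/
theorem stmt_8 {Ω : Type*} [MeasurableSpace Ω] (μ : Measure Ω) [IsProbabilityMeasure μ]
    (X : ℕ → Ω → ℂ) (hXmeas : ∀ p, Measurable (X p))
    (hXindep : iIndepFun
      (fun p : {p : ℕ // p.Prime} => X p) μ)
    (hXunif : ∀ p : ℕ, p.Prime → μ.map (X p) = circleUniform)
    (z : ℝ) (hz : 2 ≤ z) (a : ℕ → ℂ) (k : ℕ) (hk : 1 ≤ k) :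
    (∫ ω, ‖∑ p ∈ (Finset.range (⌊z⌋₊ + 1)).filter Nat.Prime, a p * X p ω‖ ^ (2 * k) ∂μ) ≤
      (k.factorial : ℝ) *
        (∑ p ∈ (Finset.range (⌊z⌋₊ + 1)).filter Nat.Prime, ‖a p‖ ^ 2) ^ k := by
  classical
  set F : Finset ℕ := (Finset.range (⌊z⌋₊ + 1)).filter Nat.Prime with hF
  have hFprime : ∀ p ∈ F, p.Prime := fun p hp => (Finset.mem_filter.1 hp).2
  set T : Finset (Fin k → ℕ) := Fintype.piFinset (fun _ : Fin k => F) with hT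
  -- counts
  set c : (Fin k → ℕ) → ℕ → ℕ := fun f p => (Finset.univ.filter fun i => f i = p).card with hc
  set A : (Fin k → ℕ) → ℂ := fun f => ∏ i, a (f i) with hA
  set P : (Fin k → ℕ) → (Fin k → ℕ) → Prop := fun f g => ∀ p ∈ F, c f p = c g p with hP
  set Tm : (Fin k → ℕ) → (Fin k → ℕ) → Ω → ℂ := fun f g ω =>
    (∏ i, (a (f i) * X (f i) ω)) *
      ∏ i, ((starRingEnd ℂ) (a (g i)) * (starRingEnd ℂ) (X (g i) ω)) with hTm
  -- a.e. norm one
  have haeP : ∀ p, p.Prime → ∀ᵐ ω ∂μ, ‖X p ω‖ = 1 := by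
    intro p hp
    have hset : MeasurableSet {w : ℂ | ‖w‖ = 1} := measurable_norm (measurableSet_singleton 1)
    have h1 : ∀ᵐ w ∂circleUniform, ‖w‖ = 1 := by
      rw [circleUniform, ae_map_iff (by fun_prop) hset]
      filter_upwards with t
      simp [Complex.norm_exp]
    rw [← hXunif p hp] at h1
    exact (ae_map_iff (hXmeas p).aemeasurable hset).1 h1
  have haeF : ∀ᵐ ω ∂μ, ∀ p ∈ F, ‖X p ω‖ = 1 :=
    (ae_ball_iff F.countable_toSet).2 (fun p hp => haeP p (hFprime p hp))
  -- moments
  have hmoment : ∀ p, p.Prime → ∀ m n : ℕ,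
      ∫ ω, (X p ω) ^ m * (starRingEnd ℂ) (X p ω) ^ n ∂μ = if m = n then 1 else 0 := by
    intro p hp m n
    have hsm : AEStronglyMeasurable (fun w : ℂ => w ^ m * (starRingEnd ℂ) w ^ n) (μ.map (X p)) :=
      ((continuous_pow m).mul ((Complex.continuous_conj.pow n))).aestronglyMeasurable
    rw [← integral_map (hXmeas p).aemeasurable hsm, hXunif p hp, circle_moment]
  -- pointwise expansion
  have key : ∀ ω, (‖∑ p ∈ F, a p * X p ω‖ : ℝ) ^ (2 * k)
      = ∑ f ∈ T, ∑ g ∈ T, (Tm f g ω).re := by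
    intro ω
    set S : ℂ := ∑ p ∈ F, a p * X p ω with hS
    have h1 : S * (starRingEnd ℂ) S = ((‖S‖ : ℝ) : ℂ) ^ 2 := by
      rw [Complex.mul_conj, Complex.normSq_eq_norm_sq]
      push_cast
      ring
    have h2 : (S * (starRingEnd ℂ) S) ^ k = ∑ f ∈ T, ∑ g ∈ T, Tm f g ω := by
      rw [mul_pow]
      rw [show (starRingEnd ℂ) S
          = ∑ p ∈ F, (starRingEnd ℂ) (a p) * (starRingEnd ℂ) (X p ω) by
        rw [hS, map_sum]; simp]
      rw [Finset.sum_pow', Finset.sum_pow', Finset.sum_mul_sum]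
    have h3 : ((S * (starRingEnd ℂ) S) ^ k).re = ‖S‖ ^ (2 * k) := by
      rw [h1, ← Complex.ofReal_pow, ← Complex.ofReal_pow, Complex.ofReal_re, ← pow_mul]
    rw [← h3, h2]
    simp only [Complex.re_sum]
  -- integrability of terms
  have hTmmeas : ∀ f g, Measurable (Tm f g) := by
    intro f g
    exact (Finset.measurable_prod _ fun i _ => measurable_const.mul (hXmeas _)).mul
      (Finset.measurable_prod _ fun i _ =>
        measurable_const.mul (Complex.continuous_conj.measurable.comp (hXmeas _)))
  have hTmint : ∀ f ∈ T, ∀ g ∈ T, Integrable (Tm f g) μ := by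
    intro f hf g hg
    refine Integrable.mono' (integrable_const ((∏ i, ‖a (f i)‖) * ∏ i, ‖a (g i)‖))
      (hTmmeas f g).aestronglyMeasurable ?_
    filter_upwards [haeF] with ω hω
    refine le_of_eq ?_
    calc ‖Tm f g ω‖
        = (∏ i, ‖a (f i)‖ * ‖X (f i) ω‖) * ∏ i, ‖a (g i)‖ * ‖X (g i) ω‖ := by
          simp [hTm, norm_mul, norm_prod, RCLike.norm_conj]
      _ = (∏ i, ‖a (f i)‖) * ∏ i, ‖a (g i)‖ := by
          congr 1
          · exact Finset.prod_congr rfl fun i _ => by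
              rw [hω (f i) (Fintype.mem_piFinset.1 hf i), mul_one]
          · exact Finset.prod_congr rfl fun i _ => by
              rw [hω (g i) (Fintype.mem_piFinset.1 hg i), mul_one]
  -- value of term integrals
  have hterm : ∀ f ∈ T, ∀ g ∈ T, ∫ ω, Tm f g ω ∂μ
      = (A f * (starRingEnd ℂ) (A g)) * (if P f g then 1 else 0) := by
    intro f hf g hg
    have hfF : ∀ i, f i ∈ F := Fintype.mem_piFinset.1 hf
    have hgF : ∀ i, g i ∈ F := Fintype.mem_piFinset.1 hg
    have hTm_eq : ∀ ω, Tm f g ω = (A f * (starRingEnd ℂ) (A g)) *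
        ((∏ i, X (f i) ω) * ∏ i, (starRingEnd ℂ) (X (g i) ω)) := by
      intro ω
      rw [hTm, hA]
      simp only [Finset.prod_mul_distrib, map_prod]
      ring
    simp_rw [hTm_eq]
    rw [integral_const_mul]
    congr 1
    have hgrp : ∀ ω, (∏ i, X (f i) ω) * ∏ i, (starRingEnd ℂ) (X (g i) ω)
        = ∏ p ∈ F, ((X p ω) ^ c f p * (starRingEnd ℂ) (X p ω) ^ c g p) := by
      intro ω
      rw [group_prod hfF (fun p => X p ω), group_prod hgF (fun p => (starRingEnd ℂ) (X p ω)),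
        ← Finset.prod_mul_distrib]
    simp_rw [hgrp]
    have hFsub : ∀ (v : ℕ → ℂ), ∏ p ∈ F, v p = ∏ q ∈ F.subtype Nat.Prime, v q.1 :=
      fun v => (Finset.prod_subtype_of_mem v hFprime).symm
    simp_rw [hFsub]
    set Y : {p : ℕ // p.Prime} → Ω → ℂ := fun q ω =>
      (X q.1 ω) ^ c f q.1 * (starRingEnd ℂ) (X q.1 ω) ^ c g q.1 with hY
    have hYmeas : ∀ q, Measurable (Y q) :=
      fun q => ((hXmeas q.1).pow_const _).mul
        ((Complex.continuous_conj.measurable.comp (hXmeas q.1)).pow_const _)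
    have hYindep : iIndepFun Y μ := by
      have := hXindep.comp
        (fun q (w : ℂ) => w ^ c f q.1 * (starRingEnd ℂ) w ^ c g q.1)
        (fun q => ((measurable_id.pow_const _).mul
          (Complex.continuous_conj.measurable.pow_const _)))
      exact this
    have hYbd : ∀ q, ∀ᵐ ω ∂μ, ‖Y q ω‖ ≤ 1 := by
      intro q
      filter_upwards [haeP q.1 q.2] with ω hω
      rw [hY]
      simp [norm_mul, norm_pow, RCLike.norm_conj, hω]
    rw [integral_prod_of_indep μ Y hYmeas hYindep hYbd]
    have hval : ∀ q : {p : ℕ // p.Prime}, ∫ ω, Y q ω ∂μ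
        = if c f q.1 = c g q.1 then (1:ℂ) else 0 :=
      fun q => hmoment q.1 q.2 _ _
    rw [Finset.prod_congr rfl (fun q _ => hval q), ← hFsub fun p => if c f p = c g p then 1 else 0,
      Finset.prod_boole]
  have hreint : ∀ f ∈ T, ∀ g ∈ T, Integrable (fun ω => (Tm f g ω).re) μ := by
    intro f hf g hg
    simpa only [RCLike.re_to_complex] using (hTmint f hf g hg).re
  have hstep : (∫ ω, ‖∑ p ∈ F, a p * X p ω‖ ^ (2 * k) ∂μ)
      = ∑ f ∈ T, ∑ g ∈ T, ((A f * (starRingEnd ℂ) (A g)) * (if P f g then 1 else 0)).re := by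
    calc (∫ ω, ‖∑ p ∈ F, a p * X p ω‖ ^ (2 * k) ∂μ)
        = ∫ ω, ∑ f ∈ T, ∑ g ∈ T, (Tm f g ω).re ∂μ :=
          integral_congr_ae (Filter.Eventually.of_forall key)
      _ = ∑ f ∈ T, ∫ ω, ∑ g ∈ T, (Tm f g ω).re ∂μ :=
          integral_finset_sum T (fun f hf => integrable_finset_sum T (fun g hg => hreint f hf g hg))
      _ = ∑ f ∈ T, ∑ g ∈ T, ∫ ω, (Tm f g ω).re ∂μ :=
          Finset.sum_congr rfl fun f hf => integral_finset_sum T (fun g hg => hreint f hf g hg)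
      _ = ∑ f ∈ T, ∑ g ∈ T, (∫ ω, Tm f g ω ∂μ).re := by
          refine Finset.sum_congr rfl fun f hf => Finset.sum_congr rfl fun g hg => ?_
          simpa only [RCLike.re_to_complex] using integral_re (hTmint f hf g hg)
      _ = ∑ f ∈ T, ∑ g ∈ T, ((A f * (starRingEnd ℂ) (A g)) * (if P f g then 1 else 0)).re := by
          refine Finset.sum_congr rfl fun f hf => Finset.sum_congr rfl fun g hg => ?_
          rw [hterm f hf g hg]
  have hinner : ∀ f ∈ T, ∑ g ∈ T, ((A f * (starRingEnd ℂ) (A g)) * (if P f g then 1 else 0)).re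
      = ((T.filter (fun g => P f g)).card : ℝ) * ‖A f‖ ^ 2 := by
    intro f hf
    calc ∑ g ∈ T, ((A f * (starRingEnd ℂ) (A g)) * (if P f g then 1 else 0)).re
        = ∑ g ∈ T, (if P f g then (A f * (starRingEnd ℂ) (A g)).re else 0) :=
          Finset.sum_congr rfl fun g _ => by split <;> simp
      _ = ∑ g ∈ T.filter (fun g => P f g), (A f * (starRingEnd ℂ) (A g)).re :=
          (Finset.sum_filter _ _).symm
      _ = ∑ _g ∈ T.filter (fun g => P f g), ‖A f‖ ^ 2 := by
          refine Finset.sum_congr rfl fun g hg => ?_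
          obtain ⟨hgT, hPfg⟩ := Finset.mem_filter.1 hg
          have hAg : A g = A f := by
            rw [hA]
            simp only
            rw [group_prod (Fintype.mem_piFinset.1 hgT) a,
              group_prod (Fintype.mem_piFinset.1 hf) a]
            exact Finset.prod_congr rfl fun p hp =>
              congrArg (fun n => a p ^ n) (hPfg p hp).symm
          rw [hAg, Complex.mul_conj, Complex.normSq_eq_norm_sq,
            Complex.ofReal_re]
      _ = ((T.filter (fun g => P f g)).card : ℝ) * ‖A f‖ ^ 2 := by
          rw [Finset.sum_const, nsmul_eq_mul]
  have hcount : ∀ f ∈ T, (((T.filter (fun g => P f g)).card : ℕ) : ℝ) ≤ (k.factorial : ℝ) := by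
    intro f hf
    have hsub : T.filter (fun g => P f g)
        ⊆ Finset.image (fun σ : Equiv.Perm (Fin k) => f ∘ σ) Finset.univ := by
      intro g hg
      obtain ⟨hgT, hPfg⟩ := Finset.mem_filter.1 hg
      have hcounts : ∀ p, c f p = c g p := by
        intro p
        by_cases hp : p ∈ F
        · exact hPfg p hp
        · have h1 : c f p = 0 := by
            rw [hc]
            simp only
            rw [Finset.card_eq_zero, Finset.filter_eq_empty_iff]
            intro i _ hip
            exact hp (hip ▸ Fintype.mem_piFinset.1 hf i)
          have h2 : c g p = 0 := by
            rw [hc]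
            simp only
            rw [Finset.card_eq_zero, Finset.filter_eq_empty_iff]
            intro i _ hip
            exact hp (hip ▸ Fintype.mem_piFinset.1 hgT i)
          rw [h1, h2]
      obtain ⟨σ, hσ⟩ := exists_comp_perm (perm_of_count_eq hcounts)
      exact Finset.mem_image.2 ⟨σ, Finset.mem_univ _, hσ.symm⟩
    have : (T.filter (fun g => P f g)).card ≤ k.factorial := by
      calc (T.filter (fun g => P f g)).card
          ≤ (Finset.image (fun σ : Equiv.Perm (Fin k) => f ∘ σ) Finset.univ).card :=
            Finset.card_le_card hsub
        _ ≤ (Finset.univ : Finset (Equiv.Perm (Fin k))).card := Finset.card_image_le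
        _ = k.factorial := by
            rw [Finset.card_univ, Fintype.card_perm, Fintype.card_fin]
    exact_mod_cast this
  rw [hstep]
  calc ∑ f ∈ T, ∑ g ∈ T, ((A f * (starRingEnd ℂ) (A g)) * (if P f g then 1 else 0)).re
      = ∑ f ∈ T, ((T.filter (fun g => P f g)).card : ℝ) * ‖A f‖ ^ 2 :=
        Finset.sum_congr rfl hinner
    _ ≤ ∑ f ∈ T, (k.factorial : ℝ) * ‖A f‖ ^ 2 :=
        Finset.sum_le_sum fun f hf =>
          mul_le_mul_of_nonneg_right (hcount f hf) (by positivity)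
    _ = (k.factorial : ℝ) * ∑ f ∈ T, ‖A f‖ ^ 2 := by rw [Finset.mul_sum]
    _ = (k.factorial : ℝ) * (∑ p ∈ F, ‖a p‖ ^ 2) ^ k := by
        congr 1
        rw [Finset.sum_pow', ← hT]
        exact Finset.sum_congr rfl fun f _ => by
          rw [hA]
          simp only
          rw [norm_prod, ← Finset.prod_pow]
end

section
/- Let J ≥ 1 be an integer and let b_1,…,b_J be real numbers with b_1 ≠ 0. Then for all real M > 0, R ≥ 0 and ε > 0, the Lebesgue measure of the set { (u, v) ∈ ℝ^J × ℝ^J : |u_j| ≤ M for all j, 0 ≤ v_j ≤ 2π for all j, and R < | ∑_{j=1}^J b_j e^{u_j + i v_j} | < R + ε } is at most (2π)^{J−1} · (2M)^{J−1} · π e^{2M} (2Rε + ε²) / b_1². -/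
open Finset MeasureTheory
open Complex Metric
open scoped ENNReal NNReal

lemma det_smulRight_cx (d : ℂ) :
    ContinuousLinearMap.det
      ((ContinuousLinearMap.smulRight (1 : ℂ →L[ℂ] ℂ) d).restrictScalars ℝ) = Complex.normSq d := by
  have h : (((ContinuousLinearMap.smulRight (1 : ℂ →L[ℂ] ℂ) d).restrictScalars ℝ) :
      ℂ →ₗ[ℝ] ℂ) = Algebra.lmul ℝ ℂ d := by
    apply LinearMap.ext; intro z; simp [mul_comm]
  rw [ContinuousLinearMap.det, h, ← Algebra.norm_apply, Algebra.norm_complex_apply]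

lemma slice_bound_cx (b : ℝ) (hb : b ≠ 0) (M R ε : ℝ) (hM : 0 < M) (hR : 0 ≤ R) (hε : 0 < ε)
    (c : ℂ) :
    volume {z : ℂ | |z.re| ≤ M ∧ 0 ≤ z.im ∧ z.im ≤ 2 * Real.pi ∧
        R < ‖(b : ℂ) * Complex.exp z + c‖ ∧
        ‖(b : ℂ) * Complex.exp z + c‖ < R + ε} ≤
      ENNReal.ofReal (Real.pi * Real.exp (2 * M) * (2 * R * ε + ε ^ 2) / b ^ 2) := by
  set g : ℂ → ℝ := fun z => ‖(b : ℂ) * Complex.exp z + c‖ with hg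
  have hgc : Continuous g :=
    continuous_norm.comp (by continuity)
  set s0 : Set ℂ := {z : ℂ | |z.re| ≤ M ∧ 0 ≤ z.im ∧ z.im ≤ 2 * Real.pi ∧
      R < g z ∧ g z < R + ε} with hs0
  set s : Set ℂ := s0 ∩ {z : ℂ | z.im < 2 * Real.pi} with hs
  have hs0meas : MeasurableSet s0 := by
    apply MeasurableSet.inter
    · exact measurableSet_le (continuous_abs.comp Complex.continuous_re).measurable
        measurable_const
    apply MeasurableSet.inter
    · exact measurableSet_le measurable_const Complex.measurable_im
    apply MeasurableSet.inter
    · exact measurableSet_le Complex.measurable_im measurable_const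
    apply MeasurableSet.inter
    · exact measurableSet_lt measurable_const hgc.measurable
    · exact measurableSet_lt hgc.measurable measurable_const
  have hsmeas : MeasurableSet s :=
    hs0meas.inter (measurableSet_lt Complex.measurable_im measurable_const)
  have hline : volume {z : ℂ | z.im = 2 * Real.pi} = 0 := by
    have hmp := Complex.volume_preserving_equiv_real_prod.symm
    rw [← hmp.measure_preimage]
    · have : (Complex.measurableEquivRealProd.symm ⁻¹' {z : ℂ | z.im = 2 * Real.pi})
          = Set.univ ×ˢ {2 * Real.pi} := by
        ext ⟨x, y⟩
        simp [Complex.measurableEquivRealProd, Complex.equivRealProd, eq_comm]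
      rw [this, Measure.volume_eq_prod, Measure.prod_prod]
      simp
    · exact ((measurableSet_eq_fun Complex.measurable_im measurable_const)).nullMeasurableSet
  have hsub : volume s0 ≤ volume s := by
    have hss : s0 ⊆ s ∪ {z : ℂ | z.im = 2 * Real.pi} := by
      intro z hz
      rcases lt_or_eq_of_le hz.2.2.1 with h | h
      · exact Or.inl ⟨hz, h⟩
      · exact Or.inr h
    calc volume s0 ≤ volume (s ∪ {z : ℂ | z.im = 2 * Real.pi}) := measure_mono hss
      _ ≤ volume s + volume {z : ℂ | z.im = 2 * Real.pi} := measure_union_le _ _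
      _ = volume s := by rw [hline, add_zero]
  -- change of variables on s
  set f : ℂ → ℂ := fun z => (b : ℂ) * Complex.exp z with hf
  set f' : ℂ → ℂ →L[ℝ] ℂ := fun z =>
    (ContinuousLinearMap.smulRight (1 : ℂ →L[ℂ] ℂ) ((b : ℂ) * Complex.exp z)).restrictScalars ℝ
    with hf'
  have hderiv : ∀ z ∈ s, HasFDerivWithinAt f (f' z) s z := by
    intro z _
    have h1 : HasDerivAt f ((b : ℂ) * Complex.exp z) z :=
      (Complex.hasDerivAt_exp z).const_mul (b : ℂ)
    exact (h1.hasFDerivAt.restrictScalars ℝ).hasFDerivWithinAt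
  have hinj : Set.InjOn f s := by
    intro z1 h1 z2 h2 hfe
    have he : Complex.exp z1 = Complex.exp z2 := by
      have hb' : (b : ℂ) ≠ 0 := by exact_mod_cast hb
      exact mul_left_cancel₀ hb' hfe
    rw [Complex.exp_eq_exp_iff_exists_int] at he
    obtain ⟨k, hk⟩ := he
    have him : z1.im = z2.im + k * (2 * Real.pi) := by
      have := congrArg Complex.im hk
      simpa [Complex.add_im, Complex.mul_im] using this
    have h1a : 0 ≤ z1.im := h1.1.2.1
    have h1b : z1.im < 2 * Real.pi := h1.2
    have h2a : 0 ≤ z2.im := h2.1.2.1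
    have h2b : z2.im < 2 * Real.pi := h2.2
    have hk0 : k = 0 := by
      rcases lt_trichotomy k 0 with hlt | heq | hgt
      · have hk1 : (k : ℝ) ≤ -1 := by exact_mod_cast (by omega : k ≤ -1)
        nlinarith [Real.pi_pos]
      · exact heq
      · have hk1 : (1 : ℝ) ≤ (k : ℝ) := by exact_mod_cast hgt
        nlinarith [Real.pi_pos]
    have : z1.im = z2.im := by rw [him, hk0]; simp
    have hre : z1.re = z2.re := by
      have := congrArg Complex.re hk
      simpa [Complex.add_re, Complex.mul_re, hk0] using this
    exact Complex.ext hre this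
  have key := lintegral_abs_det_fderiv_eq_addHaar_image volume hsmeas hderiv hinj
  have hdet : ∀ z : ℂ, |(f' z).det| = b ^ 2 * Real.exp (2 * z.re) := by
    intro z
    rw [hf']
    simp only [det_smulRight_cx]
    rw [_root_.abs_of_nonneg (Complex.normSq_nonneg _), map_mul]
    rw [Complex.normSq_ofReal, ← Complex.sq_norm, Complex.norm_exp]
    rw [two_mul, Real.exp_add]
    ring
  have hlow : ENNReal.ofReal (b ^ 2 * Real.exp (-(2 * M))) * volume s ≤ volume (f '' s) := by
    rw [← key, ← setLIntegral_const]
    apply setLIntegral_mono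
    · apply Measurable.ennreal_ofReal
      apply Continuous.measurable
      simp only [hdet]
      exact continuous_const.mul (Real.continuous_exp.comp (continuous_const.mul Complex.continuous_re))
    · intro z hz
      apply ENNReal.ofReal_le_ofReal
      rw [hdet]
      have hre : -M ≤ z.re := (abs_le.mp hz.1.1).1
      have : Real.exp (-(2 * M)) ≤ Real.exp (2 * z.re) := by
        apply Real.exp_le_exp.mpr; linarith
      nlinarith [sq_nonneg b]
  have himg : volume (f '' s) ≤ ENNReal.ofReal (Real.pi * (2 * R * ε + ε ^ 2)) := by
    have hsub2 : f '' s ⊆ ball (-c) (R + ε) \ closedBall (-c) R := by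
      rintro w ⟨z, hz, rfl⟩
      have h1 : R < g z := hz.1.2.2.2.1
      have h2 : g z < R + ε := hz.1.2.2.2.2
      have hd : dist (f z) (-c) = g z := by
        rw [Complex.dist_eq, hg]
        simp only [hf, sub_neg_eq_add]
      constructor
      · rw [mem_ball, hd]; exact h2
      · rw [mem_closedBall, hd]; intro hcon; exact absurd h1 (not_lt.mpr hcon)
    refine le_trans (measure_mono hsub2) ?_
    rw [measure_diff (closedBall_subset_ball (by linarith)) measurableSet_closedBall.nullMeasurableSet
      (measure_closedBall_lt_top).ne]
    rw [Complex.volume_ball, Complex.volume_closedBall]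
    have hpi : (NNReal.pi : ℝ≥0∞) = ENNReal.ofReal Real.pi := by
      rw [← NNReal.coe_real_pi, ENNReal.ofReal_coe_nnreal]
    rw [hpi, ← ENNReal.ofReal_pow (by linarith), ← ENNReal.ofReal_pow hR,
      ← ENNReal.ofReal_mul (by positivity), ← ENNReal.ofReal_mul (by positivity),
      ← ENNReal.ofReal_sub _ (by positivity)]
    apply ENNReal.ofReal_le_ofReal
    nlinarith [Real.pi_pos]
  -- combine
  have hbound : volume s ≤ ENNReal.ofReal (Real.pi * (2 * R * ε + ε ^ 2)) /
      ENNReal.ofReal (b ^ 2 * Real.exp (-(2 * M))) := by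
    rw [ENNReal.le_div_iff_mul_le]
    · rw [mul_comm]
      exact le_trans hlow himg
    · left
      simp only [ne_eq, ENNReal.ofReal_eq_zero, not_le]
      positivity
    · left; exact ENNReal.ofReal_ne_top
  refine le_trans hsub (le_trans hbound ?_)
  rw [← ENNReal.ofReal_div_of_pos (by positivity)]
  apply le_of_eq
  congr 1
  rw [Real.exp_neg]
  field_simp

lemma meas_s0 (b M R ε : ℝ) (c : ℂ) :
    MeasurableSet {z : ℂ | |z.re| ≤ M ∧ 0 ≤ z.im ∧ z.im ≤ 2 * Real.pi ∧
        R < ‖(b : ℂ) * Complex.exp z + c‖ ∧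
        ‖(b : ℂ) * Complex.exp z + c‖ < R + ε} := by
  have hgc : Continuous fun z : ℂ => ‖(b : ℂ) * Complex.exp z + c‖ :=
    continuous_norm.comp (by continuity)
  apply MeasurableSet.inter
  · exact measurableSet_le (continuous_abs.comp Complex.continuous_re).measurable
      measurable_const
  apply MeasurableSet.inter
  · exact measurableSet_le measurable_const Complex.measurable_im
  apply MeasurableSet.inter
  · exact measurableSet_le Complex.measurable_im measurable_const
  apply MeasurableSet.inter
  · exact measurableSet_lt measurable_const hgc.measurable
  · exact measurableSet_lt hgc.measurable measurable_const

lemma slice_bound_rr (b : ℝ) (hb : b ≠ 0) (M R ε : ℝ) (hM : 0 < M) (hR : 0 ≤ R) (hε : 0 < ε)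
    (c : ℂ) :
    volume {p : ℝ × ℝ | |p.1| ≤ M ∧ 0 ≤ p.2 ∧ p.2 ≤ 2 * Real.pi ∧
        R < ‖(b : ℂ) * Complex.exp ((p.1 : ℂ) + (p.2 : ℂ) * Complex.I) + c‖ ∧
        ‖(b : ℂ) * Complex.exp ((p.1 : ℂ) + (p.2 : ℂ) * Complex.I) + c‖ < R + ε} ≤
      ENNReal.ofReal (Real.pi * Real.exp (2 * M) * (2 * R * ε + ε ^ 2) / b ^ 2) := by
  have hpre : {p : ℝ × ℝ | |p.1| ≤ M ∧ 0 ≤ p.2 ∧ p.2 ≤ 2 * Real.pi ∧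
        R < ‖(b : ℂ) * Complex.exp ((p.1 : ℂ) + (p.2 : ℂ) * Complex.I) + c‖ ∧
        ‖(b : ℂ) * Complex.exp ((p.1 : ℂ) + (p.2 : ℂ) * Complex.I) + c‖ < R + ε}
      = Complex.measurableEquivRealProd.symm ⁻¹' {z : ℂ | |z.re| ≤ M ∧ 0 ≤ z.im ∧
        z.im ≤ 2 * Real.pi ∧
        R < ‖(b : ℂ) * Complex.exp z + c‖ ∧
        ‖(b : ℂ) * Complex.exp z + c‖ < R + ε} := by
    ext ⟨x, y⟩
    have hz : (Complex.measurableEquivRealProd.symm (x, y)) = (x : ℂ) + (y : ℂ) * Complex.I := by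
      exact Complex.equivRealProd_symm_apply (x, y)
    simp only [Set.mem_preimage, Set.mem_setOf_eq, hz]
    simp [Complex.add_re, Complex.add_im]
  rw [hpre, (Complex.volume_preserving_equiv_real_prod.symm).measure_preimage
    (meas_s0 b M R ε c).nullMeasurableSet]
  exact slice_bound_cx b hb M R ε hM hR hε c

/-- For `J ≥ 1`, real `b_1, …, b_J` with `b_1 ≠ 0`, and `M > 0`, `R ≥ 0`, `ε > 0`, the
Lebesgue measure of the set of `(u, v) ∈ ℝ^J × ℝ^J` with `|u_j| ≤ M`, `0 ≤ v_j ≤ 2π` and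
`R < |∑_j b_j e^{u_j + i v_j}| < R + ε` is at most
`(2π)^{J−1} (2M)^{J−1} π e^{2M} (2Rε + ε²) / b_1²`. -/
theorem stmt_13 (J : ℕ) (hJ : 0 < J) (b : Fin J → ℝ) (hb1 : b ⟨0, hJ⟩ ≠ 0)
    (M R ε : ℝ) (hM : 0 < M) (hR : 0 ≤ R) (hε : 0 < ε) :
    volume {uv : (Fin J → ℝ) × (Fin J → ℝ) |
        (∀ j, |uv.1 j| ≤ M) ∧ (∀ j, 0 ≤ uv.2 j ∧ uv.2 j ≤ 2 * Real.pi) ∧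
        R < ‖∑ j, (b j : ℂ) *
          Complex.exp ((uv.1 j : ℂ) + (uv.2 j : ℂ) * Complex.I)‖ ∧
        ‖∑ j, (b j : ℂ) *
          Complex.exp ((uv.1 j : ℂ) + (uv.2 j : ℂ) * Complex.I)‖ < R + ε} ≤
      ENNReal.ofReal ((2 * Real.pi) ^ (J - 1) * (2 * M) ^ (J - 1) *
        Real.pi * Real.exp (2 * M) * (2 * R * ε + ε ^ 2) / (b ⟨0, hJ⟩) ^ 2) := by
  obtain ⟨n, rfl⟩ : ∃ n, J = n + 1 := ⟨J - 1, (Nat.succ_pred_eq_of_pos hJ).symm⟩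
  have hb0 : b 0 ≠ 0 := by simpa using hb1
  set P := (Fin n → ℝ)
  -- the function giving the contribution of the remaining coordinates
  set csum : P → P → ℂ := fun w y => ∑ j : Fin n, (b j.succ : ℂ) *
    Complex.exp ((w j : ℂ) + (y j : ℂ) * Complex.I) with hcsum
  set A : (ℝ × ℝ) × (P × P) → ℝ := fun q => ‖(b 0 : ℂ) *
    Complex.exp ((q.1.1 : ℂ) + (q.1.2 : ℂ) * Complex.I) + csum q.2.1 q.2.2‖ with hA
  set T : Set ((ℝ × ℝ) × (P × P)) := {q | (|q.1.1| ≤ M ∧ ∀ j, |q.2.1 j| ≤ M) ∧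
      ((0 ≤ q.1.2 ∧ q.1.2 ≤ 2 * Real.pi) ∧ ∀ j, 0 ≤ q.2.2 j ∧ q.2.2 j ≤ 2 * Real.pi) ∧
      R < A q ∧ A q < R + ε} with hT
  set Φ : ((Fin (n+1) → ℝ) × (Fin (n+1) → ℝ)) → ((ℝ × ℝ) × (P × P)) := fun uv =>
    ((uv.1 0, uv.2 0), (fun j => uv.1 ((0 : Fin (n+1)).succAbove j),
      fun j => uv.2 ((0 : Fin (n+1)).succAbove j))) with hΦdef
  -- the original set is the preimage of T under Φ
  have hS : {uv : (Fin (n+1) → ℝ) × (Fin (n+1) → ℝ) |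
        (∀ j, |uv.1 j| ≤ M) ∧ (∀ j, 0 ≤ uv.2 j ∧ uv.2 j ≤ 2 * Real.pi) ∧
        R < ‖∑ j, (b j : ℂ) *
          Complex.exp ((uv.1 j : ℂ) + (uv.2 j : ℂ) * Complex.I)‖ ∧
        ‖∑ j, (b j : ℂ) *
          Complex.exp ((uv.1 j : ℂ) + (uv.2 j : ℂ) * Complex.I)‖ < R + ε}
      = Φ ⁻¹' T := by
    ext ⟨u, v⟩
    simp only [Set.mem_setOf_eq, Set.mem_preimage, hΦdef, hT, hA, hcsum, Fin.succAbove_zero]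
    rw [Fin.sum_univ_succ (f := fun j => (b j : ℂ) *
      Complex.exp ((u j : ℂ) + (v j : ℂ) * Complex.I))]
    rw [Fin.forall_fin_succ (P := fun j => |u j| ≤ M),
      Fin.forall_fin_succ (P := fun j => 0 ≤ v j ∧ v j ≤ 2 * Real.pi)]
  -- Φ is measure preserving
  have hΦ : MeasurePreserving Φ volume volume := by
    have e := MeasurableEquiv.piFinSuccAbove (fun _ : Fin (n+1) => ℝ) 0
    have he := volume_preserving_piFinSuccAbove (fun _ : Fin (n+1) => ℝ) 0
    have h1 := he.prod he
    have m1 := ((Measure.measurePreserving_swap (μ := (volume : Measure ℝ)) (ν := (volume : Measure P)))).prod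
      (MeasurePreserving.id (volume : Measure (ℝ × P)))
    have m2 := measurePreserving_prodAssoc (volume : Measure P) (volume : Measure ℝ)
      (volume : Measure (ℝ × P))
    have m3 := (MeasurePreserving.id (volume : Measure P)).prod
      ((measurePreserving_prodAssoc (volume : Measure ℝ) (volume : Measure ℝ)
        (volume : Measure P)).symm (MeasurableEquiv.prodAssoc))
    have m4 := (MeasurePreserving.id (volume : Measure P)).prod
      ((Measure.measurePreserving_swap (μ := (volume : Measure (ℝ × ℝ))) (ν := (volume : Measure P))))
    have m5 := (measurePreserving_prodAssoc (volume : Measure P) (volume : Measure P)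
      (volume : Measure (ℝ × ℝ))).symm (MeasurableEquiv.prodAssoc)
    have m6 := (Measure.measurePreserving_swap (μ := (volume : Measure (P × P))) (ν := (volume : Measure (ℝ × ℝ))))
    have hC := m6.comp (m5.comp (m4.comp (m3.comp (m2.comp (m1.comp h1)))))
    exact hC
  -- measurability of T
  have hAc : Continuous A := by
    apply continuous_norm.comp
    apply Continuous.add
    · apply continuous_const.mul
      apply Complex.continuous_exp.comp
      exact ((Complex.continuous_ofReal.comp (continuous_fst.comp continuous_fst))).add
        ((Complex.continuous_ofReal.comp (continuous_snd.comp continuous_fst)).mul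
          continuous_const)
    · apply continuous_finset_sum
      intro j _
      apply continuous_const.mul
      apply Complex.continuous_exp.comp
      exact ((Complex.continuous_ofReal.comp ((continuous_apply j).comp
          (continuous_fst.comp continuous_snd)))).add
        ((Complex.continuous_ofReal.comp ((continuous_apply j).comp
          (continuous_snd.comp continuous_snd))).mul continuous_const)
  have hTmeas : MeasurableSet T := by
    apply MeasurableSet.inter
    · apply MeasurableSet.inter
      · exact measurableSet_le
          ((_root_.continuous_abs.comp (continuous_fst.comp continuous_fst)).measurable) measurable_const
      · show MeasurableSet {q : (ℝ × ℝ) × (P × P) | ∀ j : Fin n, |q.2.1 j| ≤ M}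
        rw [Set.setOf_forall]
        exact MeasurableSet.iInter fun j => measurableSet_le (by fun_prop) measurable_const
    apply MeasurableSet.inter
    · apply MeasurableSet.inter
      · apply MeasurableSet.inter
        · exact measurableSet_le measurable_const (measurable_snd.comp measurable_fst)
        · exact measurableSet_le (measurable_snd.comp measurable_fst) measurable_const
      · show MeasurableSet {q : (ℝ × ℝ) × (P × P) |
            ∀ j : Fin n, 0 ≤ q.2.2 j ∧ q.2.2 j ≤ 2 * Real.pi}
        rw [Set.setOf_forall]
        refine MeasurableSet.iInter fun j => MeasurableSet.inter ?_ ?_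
        · have hm : Measurable fun q : (ℝ × ℝ) × (P × P) => q.2.2 j := by fun_prop
          exact measurableSet_le measurable_const hm
        · have hm : Measurable fun q : (ℝ × ℝ) × (P × P) => q.2.2 j := by fun_prop
          exact measurableSet_le hm measurable_const
    apply MeasurableSet.inter
    · exact measurableSet_lt measurable_const hAc.measurable
    · exact measurableSet_lt hAc.measurable measurable_const
  rw [hS, hΦ.measure_preimage hTmeas.nullMeasurableSet]
  rw [Measure.volume_eq_prod, Measure.prod_apply_symm hTmeas]
  set K := ENNReal.ofReal (Real.pi * Real.exp (2 * M) * (2 * R * ε + ε ^ 2) / (b 0) ^ 2) with hK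
  set B1 : Set P := Set.pi Set.univ (fun _ => Set.Icc (-M) M) with hB1
  set B2 : Set P := Set.pi Set.univ (fun _ => Set.Icc 0 (2 * Real.pi)) with hB2
  have hB1m : MeasurableSet B1 := MeasurableSet.univ_pi fun _ => measurableSet_Icc
  have hB2m : MeasurableSet B2 := MeasurableSet.univ_pi fun _ => measurableSet_Icc
  have hBoxm : MeasurableSet (B1 ×ˢ B2) := hB1m.prod hB2m
  have hslice : ∀ z : P × P, volume ((fun x => (x, z)) ⁻¹' T) ≤
      (B1 ×ˢ B2).indicator (fun _ => K) z := by
    intro z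
    by_cases hz : z ∈ B1 ×ˢ B2
    · rw [Set.indicator_of_mem hz]
      have hz1 : ∀ j, |z.1 j| ≤ M := fun j => abs_le.mpr (hz.1 j (Set.mem_univ j))
      have hz2 : ∀ j, 0 ≤ z.2 j ∧ z.2 j ≤ 2 * Real.pi := fun j => hz.2 j (Set.mem_univ j)
      have heq : ((fun x => (x, z)) ⁻¹' T) = {p : ℝ × ℝ | |p.1| ≤ M ∧ 0 ≤ p.2 ∧
          p.2 ≤ 2 * Real.pi ∧
          R < ‖((b 0 : ℝ) : ℂ) *
            Complex.exp ((p.1 : ℂ) + (p.2 : ℂ) * Complex.I) + csum z.1 z.2‖ ∧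
          ‖((b 0 : ℝ) : ℂ) *
            Complex.exp ((p.1 : ℂ) + (p.2 : ℂ) * Complex.I) + csum z.1 z.2‖ < R + ε} := by
        ext p
        simp only [Set.mem_preimage, hT, hA, Set.mem_setOf_eq]
        constructor
        · rintro ⟨⟨ha, -⟩, ⟨⟨hb', hc⟩, -⟩, hd, he⟩
          exact ⟨ha, hb', hc, hd, he⟩
        · rintro ⟨ha, hb', hc, hd, he⟩
          exact ⟨⟨ha, hz1⟩, ⟨⟨hb', hc⟩, hz2⟩, hd, he⟩
      rw [heq]
      exact slice_bound_rr (b 0) hb0 M R ε hM hR hε (csum z.1 z.2)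
    · rw [Set.indicator_of_notMem hz]
      have heq : ((fun x => (x, z)) ⁻¹' T) = ∅ := by
        ext p
        simp only [Set.mem_preimage, hT, hA, Set.mem_setOf_eq, Set.mem_empty_iff_false,
          iff_false]
        rintro ⟨⟨-, h1⟩, ⟨⟨-, -⟩, h2⟩, -, -⟩
        apply hz
        exact ⟨fun j _ => Set.mem_Icc.mpr (abs_le.mp (h1 j)), fun j _ => Set.mem_Icc.mpr (h2 j)⟩
      rw [heq]
      simp
  calc (∫⁻ z, volume ((fun x => (x, z)) ⁻¹' T) ∂(volume : Measure (P × P)))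
      ≤ ∫⁻ z, (B1 ×ˢ B2).indicator (fun _ => K) z ∂(volume : Measure (P × P)) :=
        lintegral_mono hslice
    _ = K * volume (B1 ×ˢ B2) := by
        rw [lintegral_indicator hBoxm, setLIntegral_const]
    _ = K * (ENNReal.ofReal (2 * M) ^ n * ENNReal.ofReal (2 * Real.pi) ^ n) := by
        rw [Measure.volume_eq_prod, Measure.prod_prod, hB1, hB2, volume_pi_pi, volume_pi_pi]
        simp only [Real.volume_Icc, sub_neg_eq_add, sub_zero, Finset.prod_const,
          Finset.card_univ, Fintype.card_fin]
        congr 2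
        ring_nf
    _ ≤ ENNReal.ofReal ((2 * Real.pi) ^ (n + 1 - 1) * (2 * M) ^ (n + 1 - 1) *
        Real.pi * Real.exp (2 * M) * (2 * R * ε + ε ^ 2) / (b ⟨0, hJ⟩) ^ 2) := by
        have h0 : (b ⟨0, hJ⟩ : ℝ) = b 0 := by norm_num
        rw [h0, Nat.add_sub_cancel, hK]
        rw [← ENNReal.ofReal_pow (by linarith), ← ENNReal.ofReal_pow (by positivity),
          ← ENNReal.ofReal_mul (by positivity), ← ENNReal.ofReal_mul (by positivity)]
        apply ENNReal.ofReal_le_ofReal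
        apply le_of_eq
        ring
end

section
/- There is an absolute constant A > 0 with the following property. Let s0 ∈ ℂ, let 0 < r ≤ 1, and let f be analytic on an open neighbourhood of the closed disk {w ∈ ℂ : |w − s0| ≤ r} with f(s0) ≠ 0. For 0 < δ < r/2 let Z denote the (finite) set of zeros ρ of f with |ρ − s0| ≤ r − δ, let m_ρ denote the order of the zero of f at ρ, and set N := ∑_{ρ ∈ Z} m_ρ and M := max_{|w − s0| ≤ r} |f(w)/f(s0)| + 3. Then for every z with |z − s0| ≤ r − 2δ and f(z) ≠ 0, | f'(z)/f(z) − ∑_{ρ ∈ Z} m_ρ/(z − ρ) | ≤ A · δ^{−2} · ( log M + N·(log(1/δ) + 1) ). -/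
open Finset Metric

set_option maxHeartbeats 1000000

/-- Existence of a primitive of a holomorphic function on a disk. -/
lemma primitive_exists {φ : ℂ → ℂ} {c : ℂ} {R : NNReal} (hR : 0 < R)
    (hd : DifferentiableOn ℂ φ (closedBall c R)) :
    ∃ h : ℂ → ℂ, h c = 0 ∧ ∀ w ∈ ball c (R : ℝ), HasDerivAt h (φ w) w := by
  have hp := hd.hasFPowerSeriesOnBall hR
  set p := cauchyPowerSeries φ c R with hpdef
  refine ⟨fun w => ∑' n : ℕ, p.coeff n / (n + 1) * (w - c) ^ (n + 1), by simp, ?_⟩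
  intro w hw
  have hwc : dist w c < (R : ℝ) := mem_ball.mp hw
  set ρ : ℝ := (dist w c + R) / 2 with hρdef
  have hρ1 : dist w c < ρ := by rw [hρdef]; linarith
  have hρ2 : ρ < (R : ℝ) := by rw [hρdef]; linarith
  have hρ0 : 0 < ρ := lt_of_le_of_lt dist_nonneg hρ1
  have hcoe : (ρ.toNNReal : ℝ) = ρ := Real.coe_toNNReal ρ hρ0.le
  have hsum : Summable fun n => ‖p n‖ * ρ ^ n := by
    have hlt : ((ρ.toNNReal : NNReal) : ENNReal) < p.radius := by
      refine lt_of_lt_of_le ?_ hp.r_le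
      rw [ENNReal.coe_lt_coe, ← NNReal.coe_lt_coe, hcoe]
      exact hρ2
    have := p.summable_norm_mul_pow hlt
    simpa [hcoe] using this
  have key := hasDerivAt_tsum_of_isPreconnected (u := fun n => ‖p n‖ * ρ ^ n)
    (g := fun n z => p.coeff n / (n + 1) * (z - c) ^ (n + 1))
    (g' := fun n y => p.coeff n * (y - c) ^ n)
    (t := ball c ρ) (y₀ := c) (y := w)
    hsum isOpen_ball (convex_ball c ρ).isPreconnected
    (fun n y _ => by
      have h1 : HasDerivAt (fun z : ℂ => (z - c) ^ (n + 1))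
          (((n : ℂ) + 1) * (y - c) ^ n * 1) y := by
        have := ((hasDerivAt_id y).sub_const c).fun_pow (n + 1)
        simpa using this
      have h2 := h1.const_mul (p.coeff n / ((n : ℂ) + 1))
      refine h2.congr_deriv ?_
      have hne : ((n : ℂ) + 1) ≠ 0 := Nat.cast_add_one_ne_zero n
      rw [mul_one, ← mul_assoc, div_mul_cancel₀ _ hne])
    (fun n y hy => by
      have hyc : ‖y - c‖ ≤ ρ := (mem_ball_iff_norm.mp hy).le
      calc ‖p.coeff n * (y - c) ^ n‖ = ‖p n‖ * ‖y - c‖ ^ n := by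
            rw [norm_mul, norm_pow, p.norm_apply_eq_norm_coef]
      _ ≤ ‖p n‖ * ρ ^ n := by
            exact mul_le_mul_of_nonneg_left
              (pow_le_pow_left₀ (norm_nonneg _) hyc n) (norm_nonneg _))
    (mem_ball_self hρ0)
    (by
      have : (fun n : ℕ => p.coeff n / ((n : ℂ) + 1) * (c - c) ^ (n + 1)) = fun _ => 0 := by
        funext n; simp
      rw [this]; exact summable_zero)
    (mem_ball.mpr hρ1)
  have hsumid : (∑' n : ℕ, p.coeff n * (w - c) ^ n) = φ w := by
    have hmem : w - c ∈ Metric.eball (0 : ℂ) (R : ENNReal) := by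
      rw [Metric.mem_eball, edist_zero_right]
      exact_mod_cast (by simpa [dist_eq_norm] using hwc : ‖w - c‖ < (R : ℝ))
    have hs := hp.hasSum (y := w - c) hmem
    simp only [FormalMultilinearSeries.apply_eq_pow_smul_coeff, smul_eq_mul,
      add_sub_cancel] at hs
    rw [← hs.tsum_eq]
    congr 1
    funext n
    ring
  rw [hsumid] at key
  exact key

/-- Borel–Carathéodory bound. -/
lemma borel_caratheodory {h : ℂ → ℂ} {c : ℂ} {R U : ℝ} (hR : 0 < R) (hU : 0 < U)
    (hd : DifferentiableOn ℂ h (ball c R)) (hc : h c = 0)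
    (hre : ∀ w ∈ ball c R, (h w).re < U) :
    ∀ z ∈ ball c R, ‖h z‖ * (R - dist z c) ≤ 2 * U * dist z c := by
  intro z hz
  set φ : ℂ → ℂ := fun w => h w / (2 * (U : ℂ) - h w) with hφdef
  have hden : ∀ w ∈ ball c R, 2 * (U : ℂ) - h w ≠ 0 := by
    intro w hw hcon
    have heq : 2 * (U : ℂ) = h w := sub_eq_zero.mp hcon
    have : (h w).re = 2 * U := by rw [← heq]; simp
    have := hre w hw
    linarith
  have hdφ : DifferentiableOn ℂ φ (ball c R) := by
    apply DifferentiableOn.div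
    · exact hd
    · exact (differentiableOn_const _).sub hd
    · exact hden
  have hφc : φ c = 0 := by simp [hφdef, hc]
  have hmaps : Set.MapsTo φ (ball c R) (ball (φ c) 1) := by
    intro w hw
    rw [hφc, mem_ball, dist_zero_right, hφdef]
    simp only
    rw [norm_div, div_lt_one (by
      have := hden w hw
      simpa [norm_pos_iff] using this)]
    have hsq : ‖h w‖ ^ 2 < ‖2 * (U : ℂ) - h w‖ ^ 2 := by
      rw [Complex.sq_norm, Complex.sq_norm, Complex.normSq_apply, Complex.normSq_apply]
      have h2re : (2 * (U : ℂ) - h w).re = 2 * U - (h w).re := by simp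
      have h2im : (2 * (U : ℂ) - h w).im = -(h w).im := by simp
      rw [h2re, h2im]
      nlinarith [hre w hw]
    have := lt_of_pow_lt_pow_left₀ 2 (by positivity) hsq
    simpa using this
  have hsch := Complex.dist_le_div_mul_dist_of_mapsTo_ball hdφ (hmaps.mono_right ball_subset_closedBall) hz
  rw [hφc, dist_zero_right] at hsch
  have hsch' : ‖φ z‖ ≤ dist z c / R := by
    rw [div_eq_mul_inv, mul_comm]
    simpa [div_eq_mul_inv, mul_comm] using hsch
  have hzne := hden z hz
  have hid : h z = φ z * (2 * (U : ℂ) - h z) := by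
    rw [hφdef]; field_simp
  have h1 : ‖h z‖ = ‖φ z‖ * ‖2 * (U : ℂ) - h z‖ := by
    rw [← norm_mul]; exact congrArg norm hid
  have h2 : ‖2 * (U : ℂ) - h z‖ ≤ 2 * U + ‖h z‖ := by
    have := norm_sub_le (2 * (U : ℂ)) (h z)
    have h3 : ‖2 * (U : ℂ)‖ = 2 * U := by
      have : 2 * (U : ℂ) = ((2 * U : ℝ) : ℂ) := by push_cast; ring
      rw [this, Complex.norm_real, Real.norm_eq_abs, abs_of_pos (by linarith)]
    simpa [h3, abs_of_pos hU] using this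
  have habs : ‖h z‖ ≤ (dist z c / R) * (2 * U + ‖h z‖) :=
    h1.trans_le (mul_le_mul hsch' h2 (by positivity) (by positivity))
  have hdz : dist z c < R := mem_ball.mp hz
  have hdz0 : (0 : ℝ) ≤ dist z c := dist_nonneg
  have hR' : 0 < R := hR
  rw [div_mul_eq_mul_div, le_div_iff₀ hR'] at habs
  nlinarith [norm_nonneg (h z)]

/-- Landau-type lemma: there is an absolute constant `A > 0` such that whenever `f` is
analytic on a neighbourhood of the closed disk of radius `r ≤ 1` about `s0` with
`f(s0) ≠ 0`, `0 < δ < r/2`, `Z` is the (finite) set of zeros of `f` in the closed disk of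
radius `r − δ`, and `m ρ` is the order of the zero of `f` at each `ρ ∈ Z`, then for every
`z` with `|z − s0| ≤ r − 2δ` and `f(z) ≠ 0`,
`|f'(z)/f(z) − ∑_{ρ ∈ Z} m_ρ/(z−ρ)| ≤ A δ^{−2} (log M + N (log(1/δ) + 1))`,
where `M = max_{|w−s0| ≤ r} |f(w)/f(s0)| + 3` and `N = ∑_{ρ ∈ Z} m_ρ`. -/
theorem stmt_18 :
    ∃ A : ℝ, 0 < A ∧
      ∀ (s0 : ℂ) (r : ℝ), 0 < r → r ≤ 1 →
      ∀ f : ℂ → ℂ, AnalyticOnNhd ℂ f (closedBall s0 r) → f s0 ≠ 0 →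
      ∀ δ : ℝ, 0 < δ → δ < r / 2 →
      ∀ (Z : Finset ℂ) (m : ℂ → ℕ),
        (∀ ρ : ℂ, ρ ∈ Z ↔ ρ ∈ closedBall s0 (r - δ) ∧ f ρ = 0) →
        (∀ ρ ∈ Z, ∃ g : ℂ → ℂ, AnalyticAt ℂ g ρ ∧ g ρ ≠ 0 ∧
          ∀ᶠ z in nhds ρ, f z = (z - ρ) ^ (m ρ) * g z) →
        ∀ z : ℂ, z ∈ closedBall s0 (r - 2 * δ) → f z ≠ 0 →
          ‖deriv f z / f z - ∑ ρ ∈ Z, (m ρ : ℂ) / (z - ρ)‖ ≤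
            A / δ ^ 2 *
              (Real.log ((⨆ w ∈ closedBall s0 r, ‖f w / f s0‖) + 3) +
                (∑ ρ ∈ Z, (m ρ : ℝ)) * (Real.log (1 / δ) + 1)) := by
  classical
  refine ⟨100, by norm_num, ?_⟩
  intro s0 r hr hr1 f hf hfs0 δ hδ hδr Z m hZ hm z hz hfz
  have hδ1 : δ < 1 / 2 := by linarith
  have hrδ : 0 < r - δ := by linarith
  have hrδ1 : r - δ ≤ 1 := by linarith
  have hs0Z : s0 ∉ Z := fun hs => hfs0 ((hZ s0).mp hs).2
  have hzZ : z ∉ Z := fun hzz => hfz ((hZ z).mp hzz).2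
  have hzrd : z ∈ closedBall s0 (r - δ) :=
    closedBall_subset_closedBall (by linarith) hz
  -- choose local factorizations
  obtain ⟨G, hG⟩ : ∃ G : ℂ → ℂ → ℂ, ∀ ρ ∈ Z, AnalyticAt ℂ (G ρ) ρ ∧ G ρ ρ ≠ 0 ∧
      ∀ᶠ x in nhds ρ, f x = (x - ρ) ^ (m ρ) * G ρ x := by
    choose! G h1 h2 h3 using hm
    exact ⟨G, fun ρ hρ => ⟨h1 ρ hρ, h2 ρ hρ, h3 ρ hρ⟩⟩
  set P : ℂ → ℂ := fun w => ∏ ρ ∈ Z, (w - ρ) ^ m ρ with hPdef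
  set g : ℂ → ℂ := fun w =>
    if w ∈ Z then G w w / ∏ ρ ∈ Z.erase w, (w - ρ) ^ m ρ else f w / P w with hgdef
  have hPana : ∀ w : ℂ, AnalyticAt ℂ P w := fun w =>
    Finset.analyticAt_fun_prod _ (fun ρ _ => ((analyticAt_id.sub analyticAt_const).pow (m ρ)))
  have hPne : ∀ w : ℂ, w ∉ Z → P w ≠ 0 := by
    intro w hw
    rw [hPdef]
    rw [Finset.prod_ne_zero_iff]
    intro ρ hρ
    exact pow_ne_zero _ (sub_ne_zero.mpr (fun h => hw (h ▸ hρ)))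
  have hgeq : ∀ w : ℂ, w ∉ Z → g w = f w / P w := by
    intro w hw; rw [hgdef]; simp only [if_neg hw]
  have hfgP : ∀ w : ℂ, w ∉ Z → f w = g w * P w := by
    intro w hw; rw [hgeq w hw, div_mul_cancel₀ _ (hPne w hw)]
  have hQne : ∀ ρ₀ ∈ Z, (∏ ρ ∈ Z.erase ρ₀, (ρ₀ - ρ) ^ m ρ) ≠ 0 := by
    intro ρ₀ _
    rw [Finset.prod_ne_zero_iff]
    intro ρ hρ
    exact pow_ne_zero _ (sub_ne_zero.mpr fun h => (Finset.mem_erase.mp hρ).1 h.symm)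
  have hglocal : ∀ ρ₀ ∈ Z, g =ᶠ[nhds ρ₀]
      (fun x => G ρ₀ x / ∏ ρ ∈ Z.erase ρ₀, (x - ρ) ^ m ρ) := by
    intro ρ₀ hρ₀
    have h1 := (hG ρ₀ hρ₀).2.2
    have h2 : (↑(Z.erase ρ₀) : Set ℂ)ᶜ ∈ nhds ρ₀ :=
      ((Z.erase ρ₀).finite_toSet.isClosed.isOpen_compl).mem_nhds
        (by simpa using Finset.not_mem_erase ρ₀ Z)
    filter_upwards [h1, h2] with x hx1 hx2
    simp only [Set.mem_compl_iff, Finset.mem_coe] at hx2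
    by_cases hxZ : x ∈ Z
    · have hxρ : x = ρ₀ := by
        by_contra hne
        exact hx2 (Finset.mem_erase.mpr ⟨hne, hxZ⟩)
      subst hxρ
      rw [hgdef]; simp only [if_pos hxZ]
    · rw [hgeq x hxZ]
      have hxρ0 : x ≠ ρ₀ := fun h => hxZ (h ▸ hρ₀)
      have hP : P x = (x - ρ₀) ^ m ρ₀ * ∏ ρ ∈ Z.erase ρ₀, (x - ρ) ^ m ρ :=
        (Finset.mul_prod_erase Z _ hρ₀).symm
      rw [hx1, hP, mul_div_mul_left _ _ (pow_ne_zero _ (sub_ne_zero.mpr hxρ0))]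
  have hganaOn : AnalyticOnNhd ℂ g (closedBall s0 r) := by
    intro w hw
    by_cases hwZ : w ∈ Z
    · refine (AnalyticAt.div (hG w hwZ).1
        (Finset.analyticAt_fun_prod _ fun ρ _ =>
          ((analyticAt_id.sub analyticAt_const).pow (m ρ))) (hQne w hwZ)).congr
        (hglocal w hwZ).symm
    · have hZc : (↑Z : Set ℂ)ᶜ ∈ nhds w :=
        (Z.finite_toSet.isClosed.isOpen_compl).mem_nhds (by simpa using hwZ)
      have hev : (fun x => f x / P x) =ᶠ[nhds w] g := by
        filter_upwards [hZc] with x hx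
        exact (hgeq x (by simpa using hx)).symm
      exact ((hf w hw).div (hPana w) (hPne w hwZ)).congr hev
  have hgne : ∀ w ∈ closedBall s0 (r - δ), g w ≠ 0 := by
    intro w hw
    by_cases hwZ : w ∈ Z
    · rw [hgdef]; simp only [if_pos hwZ]
      exact div_ne_zero (hG w hwZ).2.1 (hQne w hwZ)
    · have hfw : f w ≠ 0 := fun h0 => hwZ ((hZ w).mpr ⟨hw, h0⟩)
      rw [hgeq w hwZ]
      exact div_ne_zero hfw (hPne w hwZ)
  -- the sup
  set Msup : ℝ := ⨆ w ∈ closedBall s0 r, ‖f w / f s0‖ with hMdef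
  have hs0mem : s0 ∈ closedBall s0 r := mem_closedBall_self hr.le
  obtain ⟨C, hC⟩ := (isCompact_closedBall s0 r).exists_bound_of_continuousOn
      (f := fun w => f w / f s0) (hf.continuousOn.div_const _)
  have hbdd : BddAbove (Set.range fun w =>
      ⨆ _ : w ∈ closedBall s0 r, ‖f w / f s0‖) := by
    refine ⟨max C 0, ?_⟩
    rintro x ⟨w, rfl⟩
    dsimp only
    by_cases hw : w ∈ closedBall s0 r
    · haveI : Nonempty (w ∈ closedBall s0 r) := ⟨hw⟩
      rw [ciSup_const]
      exact le_max_of_le_left (by simpa using hC w hw)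
    · haveI : IsEmpty (w ∈ closedBall s0 r) := ⟨hw⟩
      rw [Real.iSup_of_isEmpty]
      exact le_max_right _ _
  have hle : ∀ w ∈ closedBall s0 r, ‖f w / f s0‖ ≤ Msup := by
    intro w hw
    rw [hMdef]
    have heq : ‖f w / f s0‖ =
        ⨆ _ : w ∈ closedBall s0 r, ‖f w / f s0‖ := by
      haveI : Nonempty (w ∈ closedBall s0 r) := ⟨hw⟩
      rw [ciSup_const]
    rw [heq]
    exact le_ciSup hbdd w
  have hM1 : 1 ≤ Msup := by
    have := hle s0 hs0mem
    simpa [div_self hfs0] using this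
  have hMpos : 0 < Msup := lt_of_lt_of_le one_pos hM1
  have habsfs0 : 0 < ‖f s0‖ := norm_pos_iff.mpr hfs0
  have habsf : ∀ w ∈ closedBall s0 r,
      ‖f w‖ ≤ Msup * ‖f s0‖ := by
    intro w hw
    have h1 := hle w hw
    rw [norm_div, div_le_iff₀ habsfs0] at h1
    exact h1
  set N : ℕ := ∑ ρ ∈ Z, m ρ with hNdef
  -- maximum modulus bound for g
  have hgb : ∀ w ∈ closedBall s0 (r - δ),
      ‖g w‖ ≤ Msup * ‖f s0‖ / δ ^ N := by
    intro w hw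
    have hsub : w ∈ closure (ball s0 r) := by
      rw [closure_ball s0 hr.ne']
      exact closedBall_subset_closedBall (by linarith) hw
    have hnorm : ‖g w‖ ≤ Msup * ‖f s0‖ / δ ^ N := by
      refine Complex.norm_le_of_forall_mem_frontier_norm_le isBounded_ball ?_ ?_ hsub
      · constructor
        · intro x hx
          exact (hganaOn x (ball_subset_closedBall hx)).differentiableAt.differentiableWithinAt
        · rw [closure_ball s0 hr.ne']
          intro x hx
          exact (hganaOn x hx).continuousAt.continuousWithinAt
      · intro x hx
        rw [frontier_ball s0 hr.ne'] at hx
        have hxs : dist x s0 = r := mem_sphere.mp hx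
        have hxZ : x ∉ Z := by
          intro hxZ
          have h1 : dist x s0 ≤ r - δ := mem_closedBall.mp ((hZ x).mp hxZ).1
          linarith
        have hPb : δ ^ N ≤ ‖P x‖ := by
          rw [hPdef]
          simp only
          rw [norm_prod, hNdef, ← Finset.prod_pow_eq_pow_sum]
          apply Finset.prod_le_prod
          · intro ρ _; positivity
          · intro ρ hρ
            rw [norm_pow]
            apply pow_le_pow_left₀ hδ.le
            have h1 : dist ρ s0 ≤ r - δ := mem_closedBall.mp ((hZ ρ).mp hρ).1
            have h2 : dist x s0 ≤ dist x ρ + dist ρ s0 := dist_triangle x ρ s0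
            calc δ = r - (r - δ) := by ring
            _ ≤ dist x ρ := by rw [← hxs]; linarith
            _ = ‖x - ρ‖ := Complex.dist_eq x ρ
        have hxcb : x ∈ closedBall s0 r := by rw [mem_closedBall, hxs]
        rw [show (g x : ℂ) = f x / P x from hgeq x hxZ]
        rw [norm_div]
        exact div_le_div₀ (by positivity) (habsf x hxcb) (by positivity) hPb
    exact hnorm
  have hgs0 : ‖f s0‖ ≤ ‖g s0‖ := by
    rw [hgeq s0 hs0Z, norm_div]
    have hP1 : ‖P s0‖ ≤ 1 := by
      rw [hPdef]
      simp only
      rw [norm_prod]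
      apply Finset.prod_le_one (fun ρ _ => by positivity)
      intro ρ hρ
      rw [norm_pow]
      apply pow_le_one₀ (by positivity)
      have h1 : dist ρ s0 ≤ r - δ := mem_closedBall.mp ((hZ ρ).mp hρ).1
      calc ‖s0 - ρ‖ = dist s0 ρ := (Complex.dist_eq s0 ρ).symm
      _ = dist ρ s0 := dist_comm s0 ρ
      _ ≤ 1 := by linarith
    have hPpos : 0 < ‖P s0‖ := norm_pos_iff.mpr (hPne s0 hs0Z)
    rw [le_div_iff₀ hPpos]
    nlinarith
  -- primitive of the log derivative
  set φ : ℂ → ℂ := fun x => deriv g x / g x with hφdef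
  have hderivg : AnalyticOnNhd ℂ (deriv g) (closedBall s0 r) := hganaOn.deriv
  have hφana : ∀ x ∈ closedBall s0 (r - δ), AnalyticAt ℂ φ x := by
    intro x hx
    have hx' : x ∈ closedBall s0 r := closedBall_subset_closedBall (by linarith) hx
    exact (hderivg x hx').div (hganaOn x hx') (hgne x hx)
  have hcoeR : (((r - δ).toNNReal : NNReal) : ℝ) = r - δ := Real.coe_toNNReal _ hrδ.le
  obtain ⟨h, hh0, hhd⟩ := primitive_exists (φ := φ) (c := s0) (R := (r - δ).toNNReal)
    (Real.toNNReal_pos.mpr hrδ)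
    (by
      rw [show (closedBall s0 (((r - δ).toNNReal : NNReal) : ℝ)) = closedBall s0 (r - δ) by
        rw [hcoeR]]
      exact fun x hx => (hφana x hx).differentiableAt.differentiableWithinAt)
  rw [show (ball s0 (((r - δ).toNNReal : NNReal) : ℝ)) = ball s0 (r - δ) by rw [hcoeR]] at hhd
  -- exp h = g / g s0
  have hkconst : ∀ w ∈ ball s0 (r - δ), g w = g s0 * Complex.exp (h w) := by
    have hk : ∀ x ∈ ball s0 (r - δ),
        HasDerivAt (fun y => g y * Complex.exp (-h y)) 0 x := by
      intro x hx
      have hx' : x ∈ closedBall s0 r :=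
        closedBall_subset_closedBall (by linarith) (ball_subset_closedBall hx)
      have hgx : HasDerivAt g (deriv g x) x := (hganaOn x hx').differentiableAt.hasDerivAt
      have hhx := hhd x hx
      have hex : HasDerivAt (fun y => Complex.exp (-h y))
          (Complex.exp (-h x) * -(φ x)) x := hhx.neg.cexp
      have hmul := hgx.mul hex
      refine hmul.congr_deriv ?_
      have hgx0 : g x ≠ 0 := hgne x (ball_subset_closedBall hx)
      rw [hφdef]
      field_simp
      ring
    intro w hw
    have hzero : ∀ x ∈ ball s0 (r - δ),
        HasFDerivWithinAt (fun y => g y * Complex.exp (-h y))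
          ((0 : ℂ →L[ℂ] ℂ)) (ball s0 (r - δ)) x := by
      intro x hx
      have h0 := (hk x hx).hasFDerivAt.hasFDerivWithinAt (s := ball s0 (r - δ))
      refine h0.congr_fderiv ?_
      ext v
      simp
    have hs0b : s0 ∈ ball s0 (r - δ) := mem_ball_self hrδ
    have hcst := Convex.norm_image_sub_le_of_norm_hasFDerivWithin_le (C := 0) hzero
      (fun x _ => by simp) (convex_ball s0 (r - δ)) hs0b hw
    have heq : g w * Complex.exp (-h w) = g s0 * Complex.exp (-h s0) := by
      have : ‖g w * Complex.exp (-h w) - g s0 * Complex.exp (-h s0)‖ ≤ 0 := by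
        simpa using hcst
      have h1 : g w * Complex.exp (-h w) - g s0 * Complex.exp (-h s0) = 0 := by
        rwa [norm_le_zero_iff] at this
      exact sub_eq_zero.mp h1
    rw [hh0] at heq
    simp only [neg_zero, Complex.exp_zero, mul_one] at heq
    rw [Complex.exp_neg] at heq
    have hE : Complex.exp (h w) ≠ 0 := Complex.exp_ne_zero _
    field_simp at heq
    linear_combination heq
  -- real part bound
  set L : ℝ := Real.log Msup + (N : ℝ) * Real.log (1 / δ) with hLdef
  set U : ℝ := L + 1 with hUdef
  have hlog1δ : 0 ≤ Real.log (1 / δ) := by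
    apply Real.log_nonneg
    rw [le_div_iff₀ hδ]
    linarith
  have hL0 : 0 ≤ L := add_nonneg (Real.log_nonneg hM1)
    (mul_nonneg (Nat.cast_nonneg N) hlog1δ)
  have hU0 : 0 < U := by rw [hUdef]; linarith
  have hre : ∀ w ∈ ball s0 (r - δ), (h w).re < U := by
    intro w hw
    have hgw := hkconst w hw
    have habsgw : ‖g w‖ = ‖g s0‖ * Real.exp (h w).re := by
      rw [hgw, norm_mul, Complex.norm_exp]
    have hb := hgb w (ball_subset_closedBall hw)
    have hgs0pos : 0 < ‖g s0‖ := lt_of_lt_of_le habsfs0 hgs0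
    have hexp : Real.exp (h w).re ≤ Msup / δ ^ N := by
      rw [habsgw] at hb
      rw [← le_div_iff₀' hgs0pos] at hb
      refine hb.trans ?_
      rw [div_le_div_iff₀ hgs0pos (by positivity)]
      have hδN : (0 : ℝ) < δ ^ N := by positivity
      calc Msup * ‖f s0‖ / δ ^ N * δ ^ N = Msup * ‖f s0‖ := by
            field_simp
      _ ≤ Msup * ‖g s0‖ := by nlinarith
    have hlere : (h w).re ≤ Real.log (Msup / δ ^ N) := by
      rw [Real.le_log_iff_exp_le (by positivity)]
      exact hexp
    have hlogeq : Real.log (Msup / δ ^ N) = L := by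
      rw [hLdef, Real.log_div (ne_of_gt hMpos) (by positivity), Real.log_pow, one_div,
        Real.log_inv]
      ring
    rw [hlogeq] at hlere
    rw [hUdef]
    linarith
  -- Borel–Carathéodory
  have hhdiff : DifferentiableOn ℂ h (ball s0 (r - δ)) := fun x hx =>
    (hhd x hx).differentiableAt.differentiableWithinAt
  have hBC := borel_caratheodory hrδ hU0 hhdiff hh0 hre
  have hhb : ∀ x : ℂ, dist x s0 ≤ r - 2 * δ + δ / 2 → ‖h x‖ ≤ 4 * U / δ := by
    intro x hx
    have hx' : x ∈ ball s0 (r - δ) := by rw [mem_ball]; linarith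
    have hbc := hBC x hx'
    have hd0 : (0 : ℝ) ≤ dist x s0 := dist_nonneg
    have habs0 : (0 : ℝ) ≤ ‖h x‖ := norm_nonneg _
    rw [le_div_iff₀ hδ]
    nlinarith
  -- Schwarz at z
  have hzd : dist z s0 ≤ r - 2 * δ := mem_closedBall.mp hz
  have hsub2 : ball z (δ / 2) ⊆ ball s0 (r - δ) := by
    intro x hx
    rw [mem_ball] at hx ⊢
    have := dist_triangle x z s0
    linarith
  have hmaps2 : Set.MapsTo h (ball z (δ / 2)) (ball (h z) (8 * U / δ + 1)) := by
    intro x hx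
    rw [mem_ball] at hx ⊢
    have hxd : dist x s0 ≤ r - 2 * δ + δ / 2 := by
      have := dist_triangle x z s0
      linarith
    have h1 := hhb x hxd
    have h2 := hhb z (by linarith)
    calc dist (h x) (h z) ≤ ‖h x‖ + ‖h z‖ := by
          rw [dist_eq_norm]; exact norm_sub_le _ _
    _ ≤ 4 * U / δ + 4 * U / δ := add_le_add h1 h2
    _ = 8 * U / δ := by ring
    _ < 8 * U / δ + 1 := by linarith
  have hd2 : DifferentiableOn ℂ h (ball z (δ / 2)) := hhdiff.mono hsub2
  have hderivh := Complex.norm_deriv_le_div_of_mapsTo_ball hd2 (hmaps2.mono_right ball_subset_closedBall) (by positivity)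
  have hzball' : z ∈ ball s0 (r - δ) := by rw [mem_ball]; linarith
  have hderivval : deriv h z = φ z := (hhd z hzball').deriv
  -- log derivative identity
  have hsum_eq : deriv f z / f z - ∑ ρ ∈ Z, (m ρ : ℂ) / (z - ρ) = φ z := by
    have hZc : (↑Z : Set ℂ)ᶜ ∈ nhds z :=
      (Z.finite_toSet.isClosed.isOpen_compl).mem_nhds (by simpa using hzZ)
    have hev : f =ᶠ[nhds z] fun x => g x * P x := by
      filter_upwards [hZc] with x hx
      exact hfgP x (by simpa using hx)
    have hgz : g z ≠ 0 := hgne z hzrd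
    have hPz : P z ≠ 0 := hPne z hzZ
    have hzr : z ∈ closedBall s0 r := closedBall_subset_closedBall (by linarith) hz
    have hgdz : DifferentiableAt ℂ g z := (hganaOn z hzr).differentiableAt
    have hPdz : DifferentiableAt ℂ P z := (hPana z).differentiableAt
    have hld : logDeriv f z = logDeriv (fun x => g x * P x) z := by
      rw [logDeriv_apply, logDeriv_apply, hev.deriv_eq, hev.self_of_nhds]
    have hld2 : logDeriv (fun x => g x * P x) z = logDeriv g z + logDeriv P z :=
      logDeriv_mul z hgz hPz hgdz hPdz
    have hldP : logDeriv P z = ∑ ρ ∈ Z, (m ρ : ℂ) / (z - ρ) := by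
      rw [hPdef]
      rw [logDeriv_prod (s := Z) (f := fun ρ => fun w => (w - ρ) ^ m ρ) (x := z)
        (fun ρ hρ => pow_ne_zero _ (sub_ne_zero.mpr fun hh => hzZ (hh ▸ hρ)))
        (fun ρ _ => (differentiableAt_id.sub_const ρ).pow (m ρ))]
      refine Finset.sum_congr rfl ?_
      intro ρ hρ
      have hzρ : z - ρ ≠ 0 := sub_ne_zero.mpr fun hh => hzZ (hh ▸ hρ)
      have hstep : logDeriv (fun w : ℂ => (w - ρ) ^ m ρ) z =
          (m ρ : ℂ) * logDeriv (fun w : ℂ => w - ρ) z :=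
        logDeriv_fun_pow (differentiableAt_id.sub_const ρ) (m ρ)
      rw [hstep, logDeriv_apply, deriv_sub_const, deriv_id'']
      field_simp
    have hfin : deriv f z / f z = logDeriv f z := (logDeriv_apply f z).symm
    rw [hfin, hld, hld2, hldP]
    have : logDeriv g z = φ z := by rw [logDeriv_apply, hφdef]
    rw [this]
    ring
  -- final numeric computation
  rw [hsum_eq]
  have hfinb : ‖φ z‖ ≤ (8 * U / δ + 1) / (δ / 2) := by
    rw [← hderivval]
    exact hderivh
  have hNsum : (∑ ρ ∈ Z, (m ρ : ℝ)) = (N : ℝ) := by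
    rw [hNdef]; push_cast; rfl
  rw [hNsum]
  set a : ℝ := Real.log (Msup + 3) with hadef
  have ha1 : 1 ≤ a := by
    rw [hadef, Real.le_log_iff_exp_le (by linarith)]
    calc Real.exp 1 ≤ 2.7182818286 := Real.exp_one_lt_d9.le
    _ ≤ Msup + 3 := by linarith
  have hUB : U ≤ a + (N : ℝ) * Real.log (1 / δ) + 1 := by
    have hlm : Real.log Msup ≤ a := by
      rw [hadef]
      exact Real.log_le_log hMpos (by linarith)
    rw [hUdef, hLdef]
    linarith
  have hN0 : (0 : ℝ) ≤ (N : ℝ) := Nat.cast_nonneg N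
  refine hfinb.trans ?_
  have hkey : (8 * U / δ + 1) / (δ / 2) = (16 * U + 2 * δ) / δ ^ 2 := by
    field_simp
    ring
  rw [hkey]
  have hrhs : (100 : ℝ) / δ ^ 2 * (a + (N : ℝ) * (Real.log (1 / δ) + 1)) =
      100 * (a + (N : ℝ) * (Real.log (1 / δ) + 1)) / δ ^ 2 := by ring
  rw [hrhs]
  gcongr
  nlinarith [hUB, ha1, hN0, hlog1δ, hδ1, mul_nonneg hN0 hlog1δ]
end
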